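/- arXiv:1507.03798 — 3 statements merged into one kernel-verified Lean document; each statement's English description precedes it below -/
import Mathlib

section
/- Suppose F_0 and F_1 are finite-dimensional Banach lattices of functions on the same finite set I (norms on ℂ^I with the ideal property). Then for every ε > 0 there exists a continuous map Δ : F_0F_1 \ {0} → F_1 taking nonnegative values such that ‖Δf‖_{F_1} ≤ 1 and ‖f·(Δf)^{-1}‖_{F_0} ≤ (1+ε)‖f‖_{F_0F_1} for every nonzero f ∈ F_0F_1, where the quotient f·(Δf)^{-1} is computed pointwise with the conventions 0·0^{-1} = 0 and a·0^{-1} = ∞ for a ≠ 0 (so in particular Δf is nonzero at every point where f is nonzero). -/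
set_option linter.unusedSectionVars false
set_option maxHeartbeats 1000000


noncomputable section

/-- `N` is the norm of a (finite-dimensional) Banach lattice of functions on `ι`:
a norm on `ℂ^ι` with the ideal property. -/
def IsIdealNorm {ι : Type*} (N : (ι → ℂ) → ℝ) : Prop :=
  (∀ f g, N (f + g) ≤ N f + N g) ∧
  (∀ (c : ℂ) (f : ι → ℂ), N (c • f) = ‖c‖ * N f) ∧
  (∀ f, N f = 0 → f = 0) ∧
  (∀ f g : ι → ℂ, (∀ j, ‖g j‖ ≤ ‖f j‖) → N g ≤ N f)

/-- The norm of the pointwise product `F₀F₁` of two lattices of functions on `ι`: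
`‖h‖_{F₀F₁} = inf { ‖h₀‖_{F₀} ‖h₁‖_{F₁} : h = h₀ h₁ }`. -/
def prodNormFin {ι : Type*} (N₀ N₁ : (ι → ℂ) → ℝ) (h : ι → ℂ) : ℝ :=
  sInf {c : ℝ | ∃ h₀ h₁ : ι → ℂ, h = h₀ * h₁ ∧ c = N₀ h₀ * N₁ h₁}


namespace IdealNormAux

variable {ι : Type*} [Fintype ι] {N N₀ N₁ : (ι → ℂ) → ℝ}

lemma zero (hN : IsIdealNorm N) : N 0 = 0 := by
  have := hN.2.1 0 0; simpa using this

lemma nonneg (hN : IsIdealNorm N) (f : ι → ℂ) : 0 ≤ N f := by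
  have h1 : N (f + (-1 : ℂ) • f) ≤ N f + N ((-1 : ℂ) • f) := hN.1 _ _
  have h2 : N ((-1 : ℂ) • f) = N f := by rw [hN.2.1]; simp
  have h3 : f + (-1 : ℂ) • f = 0 := by ext j; simp
  rw [h3, zero hN, h2] at h1; linarith

lemma pos (hN : IsIdealNorm N) {f : ι → ℂ} (hf : f ≠ 0) : 0 < N f := by
  rcases lt_or_eq_of_le (nonneg hN f) with h | h
  · exact h
  · exact absurd (hN.2.2.1 f h.symm) hf

-- prodNorm basics
variable (N₀ N₁)

def pset (f : ι → ℂ) : Set ℝ := {c : ℝ | ∃ h₀ h₁ : ι → ℂ, f = h₀ * h₁ ∧ c = N₀ h₀ * N₁ h₁}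

variable {N₀ N₁}

lemma pset_nonempty (f : ι → ℂ) : (pset N₀ N₁ f).Nonempty :=
  ⟨N₀ f * N₁ 1, f, 1, by simp, rfl⟩

lemma pset_nonneg (h₀ : IsIdealNorm N₀) (h₁ : IsIdealNorm N₁) {f : ι → ℂ} :
    ∀ c ∈ pset N₀ N₁ f, 0 ≤ c := by
  rintro c ⟨a, b, -, rfl⟩
  exact mul_nonneg (nonneg h₀ a) (nonneg h₁ b)

lemma pset_bdd (h₀ : IsIdealNorm N₀) (h₁ : IsIdealNorm N₁) (f : ι → ℂ) :
    BddBelow (pset N₀ N₁ f) := ⟨0, fun c hc => pset_nonneg h₀ h₁ c hc⟩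

lemma pn_nonneg (h₀ : IsIdealNorm N₀) (h₁ : IsIdealNorm N₁) (f : ι → ℂ) :
    0 ≤ prodNormFin N₀ N₁ f :=
  Real.sInf_nonneg (pset_nonneg h₀ h₁)

lemma pn_le (h₀ : IsIdealNorm N₀) (h₁ : IsIdealNorm N₁) (a b : ι → ℂ) :
    prodNormFin N₀ N₁ (a * b) ≤ N₀ a * N₁ b :=
  csInf_le (pset_bdd h₀ h₁ _) ⟨a, b, rfl, rfl⟩

lemma pn_exists_lt (h₀ : IsIdealNorm N₀) (h₁ : IsIdealNorm N₁) {f : ι → ℂ} {t : ℝ}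
    (ht : prodNormFin N₀ N₁ f < t) :
    ∃ a b : ι → ℂ, f = a * b ∧ N₀ a * N₁ b < t := by
  obtain ⟨c, hc, hct⟩ := exists_lt_of_csInf_lt (pset_nonempty f) ht
  obtain ⟨a, b, hab, rfl⟩ := hc
  exact ⟨a, b, hab, hct⟩

lemma pn_mono (h₀ : IsIdealNorm N₀) (h₁ : IsIdealNorm N₁) {u v : ι → ℂ}
    (huv : ∀ j, ‖u j‖ ≤ ‖v j‖) :
    prodNormFin N₀ N₁ u ≤ prodNormFin N₀ N₁ v := by
  apply le_csInf (pset_nonempty v)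
  rintro c ⟨a, b, rfl, rfl⟩
  set q : ι → ℂ := fun j => u j / b j with hq
  have hu : u = q * b := by
    ext j
    by_cases hb : b j = 0
    · have hv : (a * b) j = 0 := by simp [hb]
      have : u j = 0 := by
        have := huv j; rw [hv] at this; simp at this
        exact this
      simp [this, hq, hb]
    · simp [hq, div_mul_cancel₀ _ hb]
  have hqa : ∀ j, ‖q j‖ ≤ ‖a j‖ := by
    intro j
    by_cases hb : b j = 0
    · simp [hq, hb]
    · have : ‖q j‖ = ‖u j‖ / ‖b j‖ := by simp [hq, norm_div]
      rw [this, div_le_iff₀ (by simpa using hb)]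
      calc ‖u j‖ ≤ ‖(a * b) j‖ := huv j
        _ = ‖a j‖ * ‖b j‖ := by simp [norm_mul]
  calc prodNormFin N₀ N₁ u ≤ N₀ q * N₁ b := by rw [hu] at *; exact pn_le h₀ h₁ q b
    _ ≤ N₀ a * N₁ b := mul_le_mul_of_nonneg_right (h₀.2.2.2 a q hqa) (nonneg h₁ b)

lemma pn_smul_le (h₀ : IsIdealNorm N₀) (h₁ : IsIdealNorm N₁) (c : ℂ) (f : ι → ℂ) :
    prodNormFin N₀ N₁ (c • f) ≤ ‖c‖ * prodNormFin N₀ N₁ f := by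
  rcases eq_or_ne c 0 with rfl | hc
  · have : (0 : ℂ) • f = (0 : ι → ℂ) * (0 : ι → ℂ) := by ext j; simp
    rw [this]
    have := pn_le h₀ h₁ (0 : ι → ℂ) (0 : ι → ℂ)
    simpa [zero h₀] using this
  · have hcpos : (0:ℝ) < ‖c‖ := norm_pos_iff.mpr hc
    have key : ∀ x ∈ pset N₀ N₁ f, prodNormFin N₀ N₁ (c • f) ≤ ‖c‖ * x := by
      rintro x ⟨a, b, rfl, rfl⟩
      have hh : c • (a * b) = (c • a) * b := by ext j; simp; ring
      rw [hh]
      calc prodNormFin N₀ N₁ ((c • a) * b) ≤ N₀ (c • a) * N₁ b := pn_le h₀ h₁ _ _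
        _ = ‖c‖ * (N₀ a * N₁ b) := by rw [h₀.2.1]; ring
    have h2 : prodNormFin N₀ N₁ (c • f) / ‖c‖ ≤ prodNormFin N₀ N₁ f :=
      le_csInf (pset_nonempty f) (fun x hx => (div_le_iff₀ hcpos).mpr
        (by rw [mul_comm]; exact key x hx))
    rw [div_le_iff₀ hcpos] at h2
    linarith [h2]

lemma pn_smul (h₀ : IsIdealNorm N₀) (h₁ : IsIdealNorm N₁) {c : ℂ} (hc : c ≠ 0) (f : ι → ℂ) :
    prodNormFin N₀ N₁ (c • f) = ‖c‖ * prodNormFin N₀ N₁ f := by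
  apply le_antisymm (pn_smul_le h₀ h₁ c f)
  have := pn_smul_le h₀ h₁ c⁻¹ (c • f)
  rw [smul_smul, inv_mul_cancel₀ hc, one_smul] at this
  rw [norm_inv] at this
  calc ‖c‖ * prodNormFin N₀ N₁ f ≤ ‖c‖ * (‖c‖⁻¹ * prodNormFin N₀ N₁ (c • f)) :=
        mul_le_mul_of_nonneg_left this (norm_nonneg c)
    _ = prodNormFin N₀ N₁ (c • f) :=
        mul_inv_cancel_left₀ (norm_ne_zero_iff.mpr hc) _

lemma N_abs (hN : IsIdealNorm N) (g : ι → ℂ) :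
    N (fun j => (‖g j‖ : ℂ)) = N g := by
  apply le_antisymm
  · exact hN.2.2.2 g _ (fun j => by simp)
  · exact hN.2.2.2 _ g (fun j => by simp)

lemma le_const (hN : IsIdealNorm N) {g : ι → ℂ} {M : ℝ} (hM : 0 ≤ M)
    (hg : ∀ j, ‖g j‖ ≤ M) : N g ≤ M * N 1 := by
  have h := hN.2.2.2 ((M : ℂ) • 1) g (fun j => by
    simpa [abs_of_nonneg hM] using hg j)
  rwa [hN.2.1, Complex.norm_real, Real.norm_eq_abs, abs_of_nonneg hM] at h

lemma one_pos [Nonempty ι] (hN : IsIdealNorm N) : 0 < N 1 := by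
  apply pos hN
  intro h
  have := congrFun h (Classical.arbitrary ι)
  simp at this

lemma sum_le (hN : IsIdealNorm N) {α : Type*} (s : Finset α) (F : α → (ι → ℂ)) :
    N (∑ x ∈ s, F x) ≤ ∑ x ∈ s, N (F x) := by
  classical
  induction s using Finset.induction with
  | empty => simp [zero hN]
  | insert _ _ hx ih =>
      rename_i a s
      rw [Finset.sum_insert hx, Finset.sum_insert hx]
      exact le_trans (hN.1 _ _) (by linarith)


section analytic

open Metric

variable [Nonempty ι]

/-- L1: near-optimal factorization with strictly positive, bounded-below second factor. -/
lemma exists_good_factor (h₀ : IsIdealNorm N₀) (h₁ : IsIdealNorm N₁)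
    {f₀ : ι → ℂ} (hf : f₀ ≠ 0) {σ : ℝ} (hσ : 0 < σ) :
    ∃ (h : ι → ℝ) (δ' : ℝ), 0 < δ' ∧ (∀ j, δ' ≤ h j) ∧
      N₁ (fun j => (h j : ℂ)) ≤ 1 ∧
      N₀ (fun j => f₀ j / (h j : ℂ)) ≤ prodNormFin N₀ N₁ f₀ + σ := by
  set P := prodNormFin N₀ N₁ f₀ with hP
  have hPnn : 0 ≤ P := pn_nonneg h₀ h₁ f₀
  set B₁ := N₁ 1 with hB₁
  have hB₁pos : 0 < B₁ := one_pos h₁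
  obtain ⟨g, b, hfgb, hlt⟩ := pn_exists_lt h₀ h₁ (show P < P + σ/2 by linarith)
  have hb : b ≠ 0 := by
    rintro rfl
    apply hf
    ext j; rw [hfgb]; simp
  set t := N₁ b with ht
  have htpos : 0 < t := pos h₁ hb
  set δ := σ / (2 * B₁ * (P + σ)) with hδ
  have hδpos : 0 < δ := by positivity
  set D := 1 + δ * B₁ with hD
  have hDpos : 0 < D := by positivity
  refine ⟨fun j => (‖b j‖ / t + δ) / D, δ / D, by positivity, ?_, ?_, ?_⟩
  · intro j
    have : 0 ≤ ‖b j‖ / t := by positivity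
    rw [div_le_div_iff_of_pos_right hDpos]
    linarith
  · -- norm bound
    have key : (fun j => (((‖b j‖ / t + δ) / D : ℝ) : ℂ))
        = ((D : ℂ))⁻¹ • (((t : ℂ))⁻¹ • (fun j => (‖b j‖ : ℂ)) + (δ : ℂ) • 1) := by
      ext j
      push_cast
      simp only [Pi.add_apply, Pi.smul_apply, Pi.one_apply, smul_eq_mul]
      field_simp
    rw [key, h₁.2.1]
    have e1 : ‖((t : ℂ))⁻¹‖ = t⁻¹ := by
      rw [norm_inv, Complex.norm_real, Real.norm_eq_abs, abs_of_pos htpos]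
    have e2 : ‖((δ : ℂ))‖ = δ := by
      rw [Complex.norm_real, Real.norm_eq_abs, abs_of_pos hδpos]
    have eD : ‖((D : ℂ))⁻¹‖ = D⁻¹ := by
      rw [norm_inv, Complex.norm_real, Real.norm_eq_abs, abs_of_pos hDpos]
    have h2 : N₁ (((t : ℂ))⁻¹ • (fun j => (‖b j‖ : ℂ)) + (δ : ℂ) • 1)
        ≤ D := by
      refine le_trans (h₁.1 _ _) ?_
      rw [h₁.2.1, h₁.2.1, N_abs h₁, e1, e2, ← ht, ← hB₁, hD,
        inv_mul_cancel₀ (ne_of_gt htpos)]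
    rw [eD]
    calc D⁻¹ * N₁ _ ≤ D⁻¹ * D :=
          mul_le_mul_of_nonneg_left h2 (le_of_lt (by positivity))
      _ = 1 := inv_mul_cancel₀ (ne_of_gt hDpos)
  · -- main bound
    have hgj : ∀ j, f₀ j = g j * b j := fun j => by rw [hfgb]; rfl
    have hDt : 0 < D * t := mul_pos hDpos htpos
    have hRHS : ∀ j, ‖(((D * t : ℝ) : ℂ) • g) j‖ = D * t * ‖g j‖ := by
      intro j
      rw [Pi.smul_apply, smul_eq_mul, norm_mul, Complex.norm_real, Real.norm_eq_abs,
        abs_of_pos hDt]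
    have hpw : ∀ j, ‖f₀ j / (((‖b j‖ / t + δ) / D : ℝ) : ℂ)‖
        ≤ ‖(((D * t : ℝ) : ℂ) • g) j‖ := by
      intro j
      by_cases hbj : b j = 0
      · have hz : f₀ j = 0 := by rw [hgj j, hbj, mul_zero]
        rw [hz]
        simp only [zero_div, norm_zero]
        positivity
      · have hx : 0 < ‖b j‖ := norm_pos_iff.mpr hbj
        have hdpos : 0 < (‖b j‖ / t + δ) / D := by positivity
        have hnorm : ‖f₀ j / (((‖b j‖ / t + δ) / D : ℝ) : ℂ)‖
            = (‖g j‖ * ‖b j‖) / ((‖b j‖ / t + δ) / D) := by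
          rw [norm_div, Complex.norm_real, Real.norm_eq_abs, abs_of_pos hdpos, hgj j,
            norm_mul]
        rw [hnorm, hRHS j, div_le_iff₀ hdpos]
        have hexp : D * t * ‖g j‖ * ((‖b j‖ / t + δ) / D)
            = ‖g j‖ * (‖b j‖ + t * δ) := by
          field_simp
        rw [hexp]
        nlinarith [norm_nonneg (g j), mul_pos htpos hδpos,
          mul_nonneg (norm_nonneg (g j)) (le_of_lt (mul_pos htpos hδpos))]
    refine le_trans (h₀.2.2.2 _ _ hpw) ?_
    rw [h₀.2.1, Complex.norm_real, Real.norm_eq_abs, abs_of_pos hDt]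
    have hune : 0 ≤ t * N₀ g := mul_nonneg (le_of_lt htpos) (nonneg h₀ g)
    have hu : t * N₀ g < P + σ/2 := by rw [mul_comm]; exact hlt
    have hwpos : 0 < δ * B₁ := mul_pos hδpos hB₁pos
    have hw : (δ * B₁) * (2*(P+σ)) = σ := by
      rw [hδ]; field_simp
    have hmul : (δ * B₁) * (t * N₀ g) ≤ (δ * B₁) * (P + σ/2) :=
      mul_le_mul_of_nonneg_left (le_of_lt hu) (le_of_lt hwpos)
    have hgoal : D * t * N₀ g = (t * N₀ g) + (δ * B₁) * (t * N₀ g) := by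
      rw [hD]; ring
    rw [hgoal]
    nlinarith [hmul, hw, hwpos, hune, hu, hPnn, hσ]


/-- L2: approximate lower semicontinuity of the product norm. -/
lemma pn_lsc (h₀ : IsIdealNorm N₀) (h₁ : IsIdealNorm N₁)
    {f₀ : ι → ℂ} (hf : f₀ ≠ 0) {σ : ℝ} (hσ : 0 < σ) :
    ∃ ρ : ℝ, 0 < ρ ∧ ∀ f : ι → ℂ, ‖f - f₀‖ ≤ ρ →
      prodNormFin N₀ N₁ f₀ ≤ prodNormFin N₀ N₁ f + σ := by
  set A₀ := N₀ 1 with hA₀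
  set B₁ := N₁ 1 with hB₁
  have hA₀pos : 0 < A₀ := one_pos h₀
  have hB₁pos : 0 < B₁ := one_pos h₁
  have hN₀f₀ : 0 ≤ N₀ f₀ := nonneg h₀ f₀
  set M := (N₀ f₀ + A₀) * B₁ with hM
  have hMnn : 0 ≤ M := by positivity
  set a := σ / (8 * A₀) with ha
  set bb := σ / (8 * B₁ * (M + σ)) with hbb
  have hapos : 0 < a := by positivity
  have hbbpos : 0 < bb := by positivity
  have hf₀pos : 0 < ‖f₀‖ := norm_pos_iff.mpr hf
  refine ⟨min (a * bb) (min 1 (‖f₀‖ / 2)), by positivity, ?_⟩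
  intro f hρ
  have hρab : ‖f - f₀‖ ≤ a * bb := le_trans hρ (min_le_left _ _)
  have hρ1 : ‖f - f₀‖ ≤ 1 := le_trans hρ (le_trans (min_le_right _ _) (min_le_left _ _))
  have hρf₀ : ‖f - f₀‖ ≤ ‖f₀‖ / 2 :=
    le_trans hρ (le_trans (min_le_right _ _) (min_le_right _ _))
  have hfne : f ≠ 0 := by
    intro hfz
    rw [hfz, zero_sub, norm_neg] at hρf₀
    linarith
  set Pf := prodNormFin N₀ N₁ f with hPf
  -- upper bound for Pf
  have hPfM : Pf ≤ M := by
    have h1 : Pf ≤ N₀ f * B₁ := by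
      have : f = f * 1 := by ext j; simp
      rw [hPf, hB₁]
      nth_rewrite 1 [this]
      exact pn_le h₀ h₁ f 1
    have h2 : N₀ f ≤ N₀ f₀ + A₀ := by
      have hf' : f = f₀ + (f - f₀) := by ring
      have h3 : N₀ (f - f₀) ≤ 1 * N₀ 1 := by
        apply le_const h₀ zero_le_one
        intro j
        exact le_trans (norm_le_pi_norm (f - f₀) j) hρ1
      calc N₀ f ≤ N₀ f₀ + N₀ (f - f₀) := by
            nth_rewrite 1 [hf']; exact h₀.1 _ _
        _ ≤ N₀ f₀ + A₀ := by rw [hA₀]; linarith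
    calc Pf ≤ N₀ f * B₁ := h1
      _ ≤ (N₀ f₀ + A₀) * B₁ := mul_le_mul_of_nonneg_right h2 (le_of_lt hB₁pos)
      _ = M := hM.symm
  -- near-optimal normalized factorization of f
  obtain ⟨g₁, b₁, hfgb, hlt⟩ := pn_exists_lt h₀ h₁ (show Pf < Pf + σ/4 by linarith)
  have hb₁ : b₁ ≠ 0 := by
    rintro rfl
    apply hfne; ext j; rw [hfgb]; simp
  set t := N₁ b₁ with htdef
  have htpos : 0 < t := pos h₁ hb₁
  set g' := (t : ℂ) • g₁ with hg'
  set b' := ((t : ℂ))⁻¹ • b₁ with hb'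
  have htne : (t : ℂ) ≠ 0 := by
    simp only [ne_eq, Complex.ofReal_eq_zero]
    exact ne_of_gt htpos
  have hfact : f = g' * b' := by
    ext j
    rw [hfgb]
    simp only [hg', hb', Pi.mul_apply, Pi.smul_apply, smul_eq_mul]
    field_simp
  have hNg' : N₀ g' < Pf + σ/4 := by
    rw [hg', h₀.2.1, Complex.norm_real, Real.norm_eq_abs, abs_of_pos htpos, mul_comm]
    exact hlt
  have hNb' : N₁ b' = 1 := by
    rw [hb', h₁.2.1, norm_inv, Complex.norm_real, Real.norm_eq_abs, abs_of_pos htpos,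
      ← htdef, inv_mul_cancel₀ (ne_of_gt htpos)]
  -- pointwise domination
  set W₀ : ι → ℂ := fun j => ((‖g' j‖ + a : ℝ) : ℂ) with hW₀
  set W₁ : ι → ℂ := fun j => ((‖b' j‖ + bb : ℝ) : ℂ) with hW₁
  have hdom : ∀ j, ‖f₀ j‖ ≤ ‖(W₀ * W₁) j‖ := by
    intro j
    have h1 : ‖f₀ j‖ ≤ ‖f j‖ + a * bb := by
      have := norm_le_pi_norm (f - f₀) j
      have h2 : ‖f₀ j‖ - ‖f j‖ ≤ ‖f j - f₀ j‖ := by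
        have := norm_sub_norm_le (f₀ j) (f j)
        rw [norm_sub_rev] at this
        linarith [this]
      have h3 : ‖f j - f₀ j‖ = ‖(f - f₀) j‖ := rfl
      linarith [h2, h3 ▸ this, hρab]
    have h4 : ‖f j‖ = ‖g' j‖ * ‖b' j‖ := by rw [hfact]; exact norm_mul _ _
    have h5 : ‖(W₀ * W₁) j‖ = (‖g' j‖ + a) * (‖b' j‖ + bb) := by
      rw [Pi.mul_apply, norm_mul, hW₀, hW₁, Complex.norm_real, Complex.norm_real,
        Real.norm_eq_abs, Real.norm_eq_abs,
        abs_of_nonneg (by positivity), abs_of_nonneg (by positivity)]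
    rw [h5]
    nlinarith [norm_nonneg (g' j), norm_nonneg (b' j), hapos, hbbpos]
  have hW₀N : N₀ W₀ ≤ N₀ g' + a * A₀ := by
    have hsplit : W₀ = (fun j => ((‖g' j‖ : ℝ) : ℂ)) + (a : ℂ) • 1 := by
      ext j; simp [hW₀]
    rw [hsplit]
    refine le_trans (h₀.1 _ _) ?_
    have e1 : N₀ (fun j => ((‖g' j‖ : ℝ) : ℂ)) = N₀ g' := by
      have := N_abs h₀ g'
      simpa using this
    have e2 : N₀ ((a : ℂ) • 1) = a * A₀ := by
      rw [h₀.2.1, Complex.norm_real, Real.norm_eq_abs, abs_of_pos hapos, hA₀]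
    rw [e1, e2]
  have hW₁N : N₁ W₁ ≤ 1 + bb * B₁ := by
    have hsplit : W₁ = (fun j => ((‖b' j‖ : ℝ) : ℂ)) + (bb : ℂ) • 1 := by
      ext j; simp [hW₁]
    rw [hsplit]
    refine le_trans (h₁.1 _ _) ?_
    have e1 : N₁ (fun j => ((‖b' j‖ : ℝ) : ℂ)) = N₁ b' := by
      have := N_abs h₁ b'
      simpa using this
    have e2 : N₁ ((bb : ℂ) • 1) = bb * B₁ := by
      rw [h₁.2.1, Complex.norm_real, Real.norm_eq_abs, abs_of_pos hbbpos, hB₁]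
    rw [e1, e2, hNb']
  -- combine
  have hchain : prodNormFin N₀ N₁ f₀ ≤ (N₀ g' + a * A₀) * (1 + bb * B₁) := by
    calc prodNormFin N₀ N₁ f₀ ≤ prodNormFin N₀ N₁ (W₀ * W₁) := pn_mono h₀ h₁ hdom
      _ ≤ N₀ W₀ * N₁ W₁ := pn_le h₀ h₁ W₀ W₁
      _ ≤ (N₀ g' + a * A₀) * (1 + bb * B₁) := by
          apply mul_le_mul hW₀N hW₁N (nonneg h₁ W₁)
          have := nonneg h₀ g'
          positivity
  have haA : a * A₀ = σ / 8 := by rw [ha]; field_simp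
  have hMσ : M + σ ≠ 0 := by positivity
  have hbB : bb * B₁ * (2 * (M + σ)) = σ / 4 := by
    rw [hbb, hM]
    field_simp
    ring
  have hNg'nn : 0 ≤ N₀ g' := nonneg h₀ g'
  have hbBpos : 0 < bb * B₁ := mul_pos hbbpos hB₁pos
  have hPfnn : 0 ≤ Pf := pn_nonneg h₀ h₁ f
  rw [haA] at hchain
  have hw : 0 ≤ bb * B₁ := le_of_lt hbBpos
  have h5 : (N₀ g' + σ/8) * (1 + bb*B₁)
      = N₀ g' + σ/8 + (bb*B₁) * N₀ g' + (bb*B₁)*(σ/8) := by ring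
  have h6 : (bb*B₁) * N₀ g' ≤ (bb*B₁) * (M + σ/4) :=
    mul_le_mul_of_nonneg_left (by linarith) hw
  have h7 : 2 * ((bb*B₁)*M) + 2*((bb*B₁)*σ) = σ/4 := by nlinarith [hbB]
  nlinarith [hchain, h5, h6, h7, hNg', hσ, hw, hPfM,
    mul_nonneg hw (le_of_lt hσ)]

lemma pn_pos (h₀ : IsIdealNorm N₀) (h₁ : IsIdealNorm N₁) {f : ι → ℂ} (hf : f ≠ 0) :
    0 < prodNormFin N₀ N₁ f := by
  classical
  obtain ⟨j, hj⟩ := Function.ne_iff.mp hf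
  set e : ι → ℂ := Pi.single j 1 with he
  have hene : e ≠ 0 := by
    intro hz
    have := congrFun hz j
    simp [he] at this
  have hm : 0 < N₀ e * N₁ e := mul_pos (pos h₀ hene) (pos h₁ hene)
  have key : ∀ c ∈ pset N₀ N₁ f, ‖f j‖ * (N₀ e * N₁ e) ≤ c := by
    rintro c ⟨a, b, rfl, rfl⟩
    have ha : ‖a j‖ * N₀ e ≤ N₀ a := by
      have := h₀.2.2.2 a (a j • e) (fun i => by
        rcases eq_or_ne i j with rfl | hne
        · simp [he]
        · simp [he, Pi.single_eq_of_ne hne])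
      rwa [h₀.2.1] at this
    have hb : ‖b j‖ * N₁ e ≤ N₁ b := by
      have := h₁.2.2.2 b (b j • e) (fun i => by
        rcases eq_or_ne i j with rfl | hne
        · simp [he]
        · simp [he, Pi.single_eq_of_ne hne])
      rwa [h₁.2.1] at this
    calc ‖(a * b) j‖ * (N₀ e * N₁ e) = (‖a j‖ * N₀ e) * (‖b j‖ * N₁ e) := by
          rw [Pi.mul_apply, norm_mul]; ring
      _ ≤ N₀ a * N₁ b := by
          exact mul_le_mul ha hb (mul_nonneg (norm_nonneg _) (nonneg h₁ e)) (nonneg h₀ a)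
  have : ‖f j‖ * (N₀ e * N₁ e) ≤ prodNormFin N₀ N₁ f := le_csInf (pset_nonempty f) key
  have hfj : 0 < ‖f j‖ := norm_pos_iff.mpr hj
  calc (0:ℝ) < ‖f j‖ * (N₀ e * N₁ e) := mul_pos hfj hm
    _ ≤ _ := this

/-- L3: local data near each point of the sphere. -/
lemma exists_local (h₀ : IsIdealNorm N₀) (h₁ : IsIdealNorm N₁)
    {ε : ℝ} (hε : 0 < ε) (x : ι → ℂ) :
    ∃ (ρ : ℝ) (h : ι → ℝ), 0 < ρ ∧ (∀ j, 0 < h j) ∧ N₁ (fun j => (h j : ℂ)) ≤ 1 ∧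
      (x ≠ 0 → ∀ f : ι → ℂ, ‖f - x‖ ≤ ρ →
        N₀ (fun j => f j / (h j : ℂ)) ≤ (1 + ε) * prodNormFin N₀ N₁ f) := by
  set B₁ := N₁ 1 with hB₁
  have hB₁pos : 0 < B₁ := one_pos h₁
  by_cases hx : x = 0
  · refine ⟨1, fun _ => B₁⁻¹, zero_lt_one, fun j => by positivity, ?_, fun hc => absurd hx hc⟩
    have : (fun _ : ι => ((B₁⁻¹ : ℝ) : ℂ)) = ((B₁⁻¹ : ℝ) : ℂ) • (1 : ι → ℂ) := by
      ext j; simp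
    rw [this, h₁.2.1, Complex.norm_real, Real.norm_eq_abs,
      abs_of_pos (by positivity), ← hB₁, inv_mul_cancel₀ (ne_of_gt hB₁pos)]
  · set A₀ := N₀ 1 with hA₀
    have hA₀pos : 0 < A₀ := one_pos h₀
    set P := prodNormFin N₀ N₁ x with hPdef
    have hPpos : 0 < P := pn_pos h₀ h₁ hx
    have hσ₁ : 0 < ε * P / 4 := by positivity
    have hσ₂ : 0 < ε * P / (4 * (1 + ε)) := by positivity
    obtain ⟨h, δ', hδ'pos, hhδ, hN₁h, hmain1⟩ := exists_good_factor h₀ h₁ hx hσ₁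
    obtain ⟨ρ₂, hρ₂pos, hlsc⟩ := pn_lsc h₀ h₁ hx hσ₂
    set ρ := min ρ₂ (ε * P * δ' / (4 * A₀)) with hρdef
    have hρpos : 0 < ρ := lt_min hρ₂pos (by positivity)
    refine ⟨ρ, h, hρpos, fun j => lt_of_lt_of_le hδ'pos (hhδ j), hN₁h, fun _ f hfρ => ?_⟩
    have hsplit : (fun j => f j / (h j : ℂ))
        = (fun j => x j / (h j : ℂ)) + (fun j => (f j - x j) / (h j : ℂ)) := by
      ext j
      rw [Pi.add_apply, ← add_div]
      congr 1
      ring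
    have hT : N₀ (fun j => f j / (h j : ℂ))
        ≤ N₀ (fun j => x j / (h j : ℂ)) + N₀ (fun j => (f j - x j) / (h j : ℂ)) := by
      rw [hsplit]; exact h₀.1 _ _
    have hpert : N₀ (fun j => (f j - x j) / (h j : ℂ)) ≤ (ρ / δ') * A₀ := by
      rw [hA₀]
      apply le_const h₀ (by positivity)
      intro j
      have h1 : ‖(f j - x j) / ((h j : ℝ) : ℂ)‖ = ‖f j - x j‖ / h j := by
        rw [norm_div, Complex.norm_real, Real.norm_eq_abs,
          abs_of_pos (lt_of_lt_of_le hδ'pos (hhδ j))]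
      rw [h1]
      apply div_le_div₀ (le_of_lt hρpos) _ hδ'pos (hhδ j)
      exact le_trans (norm_le_pi_norm (f - x) j) hfρ
    have hpert2 : (ρ / δ') * A₀ ≤ ε * P / 4 := by
      have hρle : ρ ≤ ε * P * δ' / (4 * A₀) := min_le_right _ _
      rw [div_mul_eq_mul_div, div_le_iff₀ hδ'pos]
      calc ρ * A₀ ≤ (ε * P * δ' / (4 * A₀)) * A₀ :=
            mul_le_mul_of_nonneg_right hρle (le_of_lt hA₀pos)
        _ = ε * P / 4 * δ' := by field_simp
    have hlow : P ≤ prodNormFin N₀ N₁ f + ε * P / (4 * (1 + ε)) :=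
      hlsc f (le_trans hfρ (min_le_left _ _))
    have hup : N₀ (fun j => x j / (h j : ℂ)) ≤ P + ε * P / 4 := hmain1
    set Q := prodNormFin N₀ N₁ f with hQdef
    have hQnn : 0 ≤ Q := pn_nonneg h₀ h₁ f
    have hkey : (1 + ε) * (P - ε * P / (4 * (1 + ε))) ≤ (1 + ε) * Q :=
      mul_le_mul_of_nonneg_left (by linarith) (by linarith)
    have hexp : (1 + ε) * (P - ε * P / (4 * (1 + ε))) = P + ε * P - ε * P / 4 := by
      field_simp
    rw [hexp] at hkey
    have := le_trans hT (by linarith : N₀ (fun j => x j / (h j : ℂ))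
        + N₀ (fun j => (f j - x j) / (h j : ℂ)) ≤ P + ε * P / 2)
    nlinarith [this, hkey, mul_pos hε hPpos]

end analytic

end IdealNormAux



open IdealNormAux Metric

/-- For finite-dimensional Banach lattices `F₀`, `F₁` on the same finite set and every
`ε > 0` there is a continuous map `Δ : F₀F₁ \ {0} → F₁` with nonnegative values such
that `‖Δ f‖_{F₁} ≤ 1` and `‖f (Δ f)⁻¹‖_{F₀} ≤ (1 + ε) ‖f‖_{F₀F₁}` (the quotient is
taken pointwise; in particular `Δ f` is nonzero wherever `f` is nonzero). -/
theorem continuous_factorization_selection {ι : Type*} [Fintype ι]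
    (N₀ N₁ : (ι → ℂ) → ℝ) (h₀ : IsIdealNorm N₀) (h₁ : IsIdealNorm N₁)
    (ε : ℝ) (hε : 0 < ε) :
    ∃ Δ : (ι → ℂ) → (ι → ℝ),
      ContinuousOn Δ {f : ι → ℂ | f ≠ 0} ∧
      ∀ f : ι → ℂ, f ≠ 0 →
        (∀ j, 0 ≤ Δ f j) ∧
        N₁ (fun j => (Δ f j : ℂ)) ≤ 1 ∧
        (∀ j, f j ≠ 0 → Δ f j ≠ 0) ∧
        N₀ (fun j => f j / (Δ f j : ℂ)) ≤ (1 + ε) * prodNormFin N₀ N₁ f := by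
  classical
  rcases isEmpty_or_nonempty ι with hemp | hne
  · refine ⟨fun _ _ => 0, ?_, ?_⟩
    · have hS : {f : ι → ℂ | f ≠ 0} = ∅ := by
        ext f
        simp only [Set.mem_setOf_eq, Set.mem_empty_iff_false, iff_false, not_not]
        ext j
        exact absurd (Nonempty.intro j) (not_nonempty_iff.mpr hemp)
      rw [hS]
      exact continuousOn_empty _
    · intro f hf
      exact absurd (funext fun j => absurd (Nonempty.intro j) (not_nonempty_iff.mpr hemp)) hf
  -- nontrivial case
  choose ρ H hρpos hHpos hHnorm hHmain using fun x : ι → ℂ => exists_local h₀ h₁ hε x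
  set S : Set (ι → ℂ) := sphere (0 : ι → ℂ) 1 with hSdef
  have hScomp : IsCompact S := isCompact_sphere 0 1
  have hcover : S ⊆ ⋃ x ∈ S, ball x (ρ x / 2) := by
    intro g hg
    exact Set.mem_biUnion hg (mem_ball_self (by linarith [hρpos g]))
  obtain ⟨b', hb'S, hb'fin, hb'cov⟩ :=
    hScomp.elim_finite_subcover_image (fun x _ => isOpen_ball) hcover
  set T : Finset (ι → ℂ) := hb'fin.toFinset with hTdef
  have hTS : ∀ x ∈ T, x ∈ S := fun x hx => hb'S (hb'fin.mem_toFinset.mp hx)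
  set ψ : (ι → ℂ) → (ι → ℂ) → ℝ := fun x f => max (ρ x / 2 - ‖f - x‖) 0 with hψdef
  have hψnn : ∀ x f, 0 ≤ ψ x f := fun x f => le_max_right _ _
  have hψpos : ∀ x f, 0 < ψ x f → ‖f - x‖ ≤ ρ x := by
    intro x f hp
    rcases le_or_gt (ρ x / 2 - ‖f - x‖) 0 with hc | hc
    · rw [hψdef] at hp; simp only [max_eq_right hc] at hp; exact absurd hp (lt_irrefl 0)
    · linarith [hρpos x]
  set den : (ι → ℂ) → ℝ := fun f => ∑ x ∈ T, ψ x f with hdendef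
  have hballpos : ∀ g : ι → ℂ, g ∈ S → ∃ x0 ∈ T, 0 < ψ x0 g := by
    intro g hgS
    obtain ⟨x0, hx0b, hx0ball⟩ := Set.mem_iUnion₂.mp (hb'cov hgS)
    refine ⟨x0, hb'fin.mem_toFinset.mpr hx0b, ?_⟩
    have hlt : ‖g - x0‖ < ρ x0 / 2 := by
      rw [mem_ball, dist_eq_norm] at hx0ball; exact hx0ball
    rw [hψdef]
    simp only [lt_max_iff]
    left; linarith
  have hden : ∀ g : ι → ℂ, ‖g‖ = 1 → 0 < den g := by
    intro g hg
    have hgS : g ∈ S := by rw [hSdef, mem_sphere_zero_iff_norm]; exact hg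
    obtain ⟨x0, hx0T, hψ0⟩ := hballpos g hgS
    exact Finset.sum_pos' (fun x _ => hψnn x g) ⟨x0, hx0T, hψ0⟩
  -- key properties on the unit sphere
  have key : ∀ g : ι → ℂ, ‖g‖ = 1 →
      (∀ j, 0 < (∑ x ∈ T, ψ x g * H x j) / den g) ∧
      N₁ (fun j => (((∑ x ∈ T, ψ x g * H x j) / den g : ℝ) : ℂ)) ≤ 1 ∧
      N₀ (fun j => g j / ((((∑ x ∈ T, ψ x g * H x j) / den g : ℝ)) : ℂ))
        ≤ (1 + ε) * prodNormFin N₀ N₁ g := by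
    intro g hg
    have hgS : g ∈ S := by rw [hSdef, mem_sphere_zero_iff_norm]; exact hg
    have hdg : 0 < den g := hden g hg
    obtain ⟨x0, hx0T, hψ0⟩ := hballpos g hgS
    have hnum : ∀ j, 0 < ∑ x ∈ T, ψ x g * H x j := by
      intro j
      exact Finset.sum_pos' (fun x _ => mul_nonneg (hψnn x g) (le_of_lt (hHpos x j)))
        ⟨x0, hx0T, mul_pos hψ0 (hHpos x0 j)⟩
    have hΔpos : ∀ j, 0 < (∑ x ∈ T, ψ x g * H x j) / den g :=
      fun j => div_pos (hnum j) hdg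
    refine ⟨hΔpos, ?_, ?_⟩
    · -- N₁ bound
      have hrw : (fun j => (((∑ x ∈ T, ψ x g * H x j) / den g : ℝ) : ℂ))
          = (((den g)⁻¹ : ℝ) : ℂ) • ∑ x ∈ T, ((ψ x g : ℝ) : ℂ) • (fun j => ((H x j : ℝ) : ℂ)) := by
        ext j
        simp only [Pi.smul_apply, Finset.sum_apply, smul_eq_mul, Finset.mul_sum]
        push_cast
        rw [Finset.sum_div]
        apply Finset.sum_congr rfl
        intro x hx
        ring
      rw [hrw, h₁.2.1]
      have hbound : N₁ (∑ x ∈ T, ((ψ x g : ℝ) : ℂ) • (fun j => ((H x j : ℝ) : ℂ)))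
          ≤ den g := by
        refine le_trans (sum_le h₁ T _) ?_
        apply Finset.sum_le_sum
        intro x hx
        rw [h₁.2.1, Complex.norm_real, Real.norm_eq_abs, abs_of_nonneg (hψnn x g)]
        calc ψ x g * N₁ (fun j => ((H x j : ℝ) : ℂ)) ≤ ψ x g * 1 :=
              mul_le_mul_of_nonneg_left (hHnorm x) (hψnn x g)
          _ = ψ x g := mul_one _
      have hnrm : ‖(((den g)⁻¹ : ℝ) : ℂ)‖ = (den g)⁻¹ := by
        rw [Complex.norm_real, Real.norm_eq_abs, abs_of_pos (by positivity)]
      rw [hnrm]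
      calc (den g)⁻¹ * N₁ _ ≤ (den g)⁻¹ * den g :=
            mul_le_mul_of_nonneg_left hbound (by positivity)
        _ = 1 := inv_mul_cancel₀ (ne_of_gt hdg)
    · -- core bound
      set w : (ι → ℂ) → ℝ := fun x => ψ x g / den g with hwdef
      have hwnn : ∀ x, 0 ≤ w x := fun x => div_nonneg (hψnn x g) (le_of_lt hdg)
      have hwsum : ∑ x ∈ T, w x = 1 := by
        rw [hwdef, ← Finset.sum_div]
        exact div_self (ne_of_gt hdg)
      set G : ι → ℂ := fun i =>
        ((∑ x ∈ T, w x * (‖g i‖ / H x i) : ℝ) : ℂ) with hGdef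
      have hΔeq : ∀ j, (∑ x ∈ T, ψ x g * H x j) / den g = ∑ x ∈ T, w x * H x j := by
        intro j
        rw [Finset.sum_div]
        apply Finset.sum_congr rfl
        intro x hx
        rw [hwdef]
        ring
      have hpw : ∀ j, ‖g j / ((((∑ x ∈ T, ψ x g * H x j) / den g : ℝ)) : ℂ)‖ ≤ ‖G j‖ := by
        intro j
        have hCS : 1 ≤ (∑ x ∈ T, w x * H x j) * (∑ x ∈ T, w x / H x j) := by
          have hcs := Finset.sum_mul_sq_le_sq_mul_sq T
            (fun x => Real.sqrt (w x * H x j)) (fun x => Real.sqrt (w x / H x j))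
          have e1 : ∑ x ∈ T, Real.sqrt (w x * H x j) * Real.sqrt (w x / H x j)
              = ∑ x ∈ T, w x := by
            apply Finset.sum_congr rfl
            intro x hx
            rw [← Real.sqrt_mul (mul_nonneg (hwnn x) (le_of_lt (hHpos x j)))]
            have hval : w x * H x j * (w x / H x j) = w x ^ 2 := by
              field_simp [ne_of_gt (hHpos x j)]
            rw [hval, Real.sqrt_sq (hwnn x)]
          have e2 : ∑ x ∈ T, Real.sqrt (w x * H x j) ^ 2 = ∑ x ∈ T, w x * H x j := by
            apply Finset.sum_congr rfl
            intro x hx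
            exact Real.sq_sqrt (mul_nonneg (hwnn x) (le_of_lt (hHpos x j)))
          have e3 : ∑ x ∈ T, Real.sqrt (w x / H x j) ^ 2 = ∑ x ∈ T, w x / H x j := by
            apply Finset.sum_congr rfl
            intro x hx
            exact Real.sq_sqrt (div_nonneg (hwnn x) (le_of_lt (hHpos x j)))
          rw [e1, e2, e3, hwsum] at hcs
          simpa using hcs
        have hsumH : 0 < ∑ x ∈ T, w x * H x j := by
          rw [← hΔeq j]; exact hΔpos j
        have hLHS : ‖g j / ((((∑ x ∈ T, ψ x g * H x j) / den g : ℝ)) : ℂ)‖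
            = ‖g j‖ / (∑ x ∈ T, w x * H x j) := by
          rw [norm_div, Complex.norm_real, Real.norm_eq_abs, abs_of_pos (hΔpos j),
            hΔeq j]
        have hRHS : ‖G j‖ = ‖g j‖ * ∑ x ∈ T, w x / H x j := by
          rw [hGdef]
          simp only
          rw [Complex.norm_real, Real.norm_eq_abs, abs_of_nonneg]
          · rw [Finset.mul_sum]
            apply Finset.sum_congr rfl
            intro x hx
            ring
          · apply Finset.sum_nonneg
            intro x hx
            exact mul_nonneg (hwnn x)
              (div_nonneg (norm_nonneg _) (le_of_lt (hHpos x j)))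
        rw [hLHS, hRHS, div_le_iff₀ hsumH]
        nlinarith [hCS, norm_nonneg (g j), hsumH]
      refine le_trans (h₀.2.2.2 G _ hpw) ?_
      have hGsum : G = ∑ x ∈ T,
          ((w x : ℝ) : ℂ) • (fun i => ((‖g i‖ / H x i : ℝ) : ℂ)) := by
        ext i
        simp only [Finset.sum_apply, Pi.smul_apply, smul_eq_mul, hGdef]
        push_cast
        rfl
      rw [hGsum]
      refine le_trans (sum_le h₀ T _) ?_
      have hterm : ∀ x ∈ T,
          N₀ (((w x : ℝ) : ℂ) • (fun i => ((‖g i‖ / H x i : ℝ) : ℂ)))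
            ≤ w x * ((1 + ε) * prodNormFin N₀ N₁ g) := by
        intro x hx
        rw [h₀.2.1, Complex.norm_real, Real.norm_eq_abs, abs_of_nonneg (hwnn x)]
        rcases eq_or_lt_of_le (hwnn x) with hw0 | hwp
        · rw [← hw0]; simp
        · apply mul_le_mul_of_nonneg_left _ (hwnn x)
          have hnormeq : ∀ i, ‖((‖g i‖ / H x i : ℝ) : ℂ)‖
              = ‖g i / ((H x i : ℝ) : ℂ)‖ := by
            intro i
            rw [Complex.norm_real, Real.norm_eq_abs,
              abs_of_nonneg (div_nonneg (norm_nonneg _) (le_of_lt (hHpos x i))),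
              norm_div, Complex.norm_real, Real.norm_eq_abs,
              abs_of_pos (hHpos x i)]
          have hux : N₀ (fun i => ((‖g i‖ / H x i : ℝ) : ℂ))
              ≤ N₀ (fun i => g i / ((H x i : ℝ) : ℂ)) :=
            h₀.2.2.2 _ _ (fun i => le_of_eq (hnormeq i))
          refine le_trans hux ?_
          have hψx : 0 < ψ x g := by
            rcases (hψnn x g).lt_or_eq with hq | hq
            · exact hq
            · exfalso
              rw [hwdef] at hwp
              simp only [← hq, zero_div] at hwp
              exact lt_irrefl 0 hwp
          have hx0 : x ≠ 0 := by
            intro hz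
            have hmem := hTS x hx
            rw [hz, hSdef, mem_sphere_zero_iff_norm] at hmem
            simp at hmem
          exact hHmain x hx0 g (hψpos x g hψx)
      calc ∑ x ∈ T, N₀ (((w x : ℝ) : ℂ) • (fun i => ((‖g i‖ / H x i : ℝ) : ℂ)))
          ≤ ∑ x ∈ T, w x * ((1 + ε) * prodNormFin N₀ N₁ g) := Finset.sum_le_sum hterm
        _ = (∑ x ∈ T, w x) * ((1 + ε) * prodNormFin N₀ N₁ g) := by
            rw [← Finset.sum_mul]
        _ = (1 + ε) * prodNormFin N₀ N₁ g := by rw [hwsum, one_mul]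
  -- the global selection
  set n : (ι → ℂ) → (ι → ℂ) := fun f => ‖f‖⁻¹ • f with hndef
  refine ⟨fun f j => (∑ x ∈ T, ψ x (n f) * H x j) / den (n f), ?_, ?_⟩
  · -- continuity
    apply continuousOn_pi.mpr
    intro j
    have hncont : ContinuousOn n {f : ι → ℂ | f ≠ 0} := by
      exact ContinuousOn.smul (f := fun f : ι → ℂ => ‖f‖⁻¹) (g := id)
        ((continuous_norm.continuousOn).inv₀
          (fun f hf => norm_ne_zero_iff.mpr hf))
        (continuous_id.continuousOn)
    have hψcont : ∀ x : ι → ℂ, Continuous (ψ x) := by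
      intro x
      apply Continuous.max _ continuous_const
      exact continuous_const.sub ((continuous_id.sub continuous_const).norm)
    have hnumcont : ContinuousOn (fun f => ∑ x ∈ T, ψ x (n f) * H x j)
        {f : ι → ℂ | f ≠ 0} := by
      apply continuousOn_finset_sum
      intro x hx
      exact (((hψcont x).comp_continuousOn hncont).mul continuousOn_const)
    have hdencont : ContinuousOn (fun f => den (n f)) {f : ι → ℂ | f ≠ 0} := by
      apply continuousOn_finset_sum
      intro x hx
      exact ((hψcont x).comp_continuousOn hncont)
    apply hnumcont.div hdencont
    intro f hf
    have : ‖n f‖ = 1 := norm_smul_inv_norm hf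
    exact ne_of_gt (hden (n f) this)
  · intro f hf
    have hnf : ‖n f‖ = 1 := norm_smul_inv_norm hf
    obtain ⟨hpos, hN1, hN0⟩ := key (n f) hnf
    refine ⟨fun j => le_of_lt (hpos j), hN1, fun j _ => ne_of_gt (hpos j), ?_⟩
    have hfC : ((‖f‖ : ℝ) : ℂ) ≠ 0 := by
      simp only [ne_eq, Complex.ofReal_eq_zero, norm_eq_zero]
      exact hf
    have hsmul : f = ((‖f‖ : ℝ) : ℂ) • n f := by
      ext j
      rw [hndef]
      simp only [Pi.smul_apply, smul_eq_mul, Complex.real_smul]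
      rw [← mul_assoc, ← Complex.ofReal_mul,
        mul_inv_cancel₀ (norm_ne_zero_iff.mpr hf), Complex.ofReal_one, one_mul]
    have hquot : (fun j => f j / (((∑ x ∈ T, ψ x (n f) * H x j) / den (n f) : ℝ) : ℂ))
        = ((‖f‖ : ℝ) : ℂ) •
          (fun j => n f j / (((∑ x ∈ T, ψ x (n f) * H x j) / den (n f) : ℝ) : ℂ)) := by
      ext j
      rw [Pi.smul_apply, smul_eq_mul, ← mul_div_assoc]
      congr 1
      exact congrFun hsmul j
    rw [hquot, h₀.2.1, Complex.norm_real, Real.norm_eq_abs, abs_of_nonneg (norm_nonneg f)]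
    have hpnf : prodNormFin N₀ N₁ f = ‖f‖ * prodNormFin N₀ N₁ (n f) := by
      conv_lhs => rw [hsmul]
      rw [pn_smul h₀ h₁ hfC (n f), Complex.norm_real, Real.norm_eq_abs,
        abs_of_nonneg (norm_nonneg f)]
    calc ‖f‖ * N₀ (fun j => n f j / (((∑ x ∈ T, ψ x (n f) * H x j) / den (n f) : ℝ) : ℂ))
        ≤ ‖f‖ * ((1 + ε) * prodNormFin N₀ N₁ (n f)) :=
          mul_le_mul_of_nonneg_left hN0 (norm_nonneg f)
      _ = (1 + ε) * (‖f‖ * prodNormFin N₀ N₁ (n f)) := by ring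
      _ = (1 + ε) * prodNormFin N₀ N₁ f := by rw [hpnf]

end
end

section
/- Let X and Y be Banach lattices of measurable functions on the same σ-finite measure space, both having the Fatou property. Then the infimum in the definition of the product norm is attained: for every function f ∈ XY there exist g ∈ X and h ∈ Y such that f = gh and ‖g‖_X · ‖h‖_Y ≤ ‖f‖_{XY}. -/
open scoped ENNReal NNReal
open Filter MeasureTheory

noncomputable section

variable {α : Type*}

/-- A quasi-normed lattice (ideal space) of measurable functions on a measure space,
described by its extended-real-valued quasi-norm `N`; the space itself is
`{f : N f < ∞}`, and it consists of (a.e. classes of) measurable functions. -/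
structure MeasLattice [MeasurableSpace α] (μ : Measure α) where
  N : (α → ℝ) → ℝ≥0∞
  ideal : ∀ f g : α → ℝ, (∀ᵐ x ∂μ, |g x| ≤ |f x|) → N g ≤ N f
  n_smul : ∀ (c : ℝ) (f : α → ℝ), N (c • f) = (‖c‖₊ : ℝ≥0∞) * N f
  n_eq_zero : ∀ f : α → ℝ, N f = 0 → f =ᵐ[μ] 0
  meas : ∀ f : α → ℝ, N f ≠ ⊤ → AEMeasurable f μ
  quasi : ∃ K : ℝ≥0, ∀ f g : α → ℝ, N (f + g) ≤ (K : ℝ≥0∞) * (N f + N g)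

/-- The lattice is a Banach lattice: its quasi-norm satisfies the triangle
inequality and the space is complete. -/
def MeasLattice.IsBanach [MeasurableSpace α] {μ : Measure α} (X : MeasLattice μ) : Prop :=
  (∀ f g : α → ℝ, X.N (f + g) ≤ X.N f + X.N g) ∧
  ∀ f : ℕ → α → ℝ, (∀ n, X.N (f n) ≠ ⊤) →
    (∀ ε : ℝ≥0∞, 0 < ε → ∃ M : ℕ, ∀ m ≥ M, ∀ n ≥ M, X.N (f m - f n) < ε) →
    ∃ g : α → ℝ, X.N g ≠ ⊤ ∧ Filter.Tendsto (fun n => X.N (f n - g)) Filter.atTop (nhds 0)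

/-- The Fatou property of the lattice `X`: if `‖f_n‖_X ≤ 1` and `f_n → g` almost
everywhere, then `g ∈ X` and `‖g‖_X ≤ 1`. -/
def MeasLattice.Fatou [MeasurableSpace α] {μ : Measure α} (X : MeasLattice μ) : Prop :=
  ∀ (f : ℕ → α → ℝ) (g : α → ℝ), (∀ n, X.N (f n) ≤ 1) →
    (∀ᵐ x ∂μ, Filter.Tendsto (fun n => f n x) Filter.atTop (nhds (g x))) →
    X.N g ≤ 1

/-- Order continuity of the quasi-norm `N`: if the pointwise supremum `sup_n |f_n|`
belongs to the lattice and `f_n → 0` almost everywhere, then `‖f_n‖ → 0`. -/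
def mOrderCont [MeasurableSpace α] (μ : Measure α) (N : (α → ℝ) → ℝ≥0∞) : Prop :=
  ∀ f : ℕ → α → ℝ,
    N (fun x => ⨆ n, |f n x|) ≠ ⊤ →
    (∀ᵐ x ∂μ, Filter.Tendsto (fun n => f n x) Filter.atTop (nhds 0)) →
    Filter.Tendsto (fun n => N (f n)) Filter.atTop (nhds 0)

/-- The quasi-norm of the pointwise product `XY` of two ideal spaces:
`‖h‖_{XY} = inf { ‖h₀‖_X ‖h₁‖_Y : h = h₀ h₁ a.e. }`. -/
def mProd [MeasurableSpace α] (μ : Measure α) (N₀ N₁ : (α → ℝ) → ℝ≥0∞)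
    (h : α → ℝ) : ℝ≥0∞ :=
  ⨅ (p : (α → ℝ) × (α → ℝ)) (_ : h =ᵐ[μ] p.1 * p.2), N₀ p.1 * N₁ p.2

/-- The norm of the order dual (associate space) of the ideal space with norm `N`:
`‖g‖_{X'} = sup { ∫ |f g| : ‖f‖_X ≤ 1 }`. -/
def mDual [MeasurableSpace α] (μ : Measure α) (N : (α → ℝ) → ℝ≥0∞)
    (g : α → ℝ) : ℝ≥0∞ :=
  ⨆ (f : α → ℝ) (_ : N f ≤ 1), ∫⁻ x, ENNReal.ofReal |f x * g x| ∂μ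

namespace MeasLattice

variable [MeasurableSpace α] {μ : Measure α} (X : MeasLattice μ)

lemma n_zero : X.N 0 = 0 := by
  have h := X.n_smul 0 0
  rw [zero_smul] at h
  simpa using h

lemma n_mono_ae {f g : α → ℝ} (h : ∀ᵐ x ∂μ, |g x| ≤ |f x|) : X.N g ≤ X.N f :=
  X.ideal f g h

lemma n_congr_ae {f g : α → ℝ} (h : f =ᵐ[μ] g) : X.N f = X.N g :=
  le_antisymm (X.ideal g f (h.mono fun _ hx => by rw [hx]))
    (X.ideal f g (h.mono fun _ hx => by rw [hx]))

lemma n_abs (f : α → ℝ) : X.N (fun x => |f x|) = X.N f :=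
  le_antisymm (X.ideal f _ (.of_forall fun x => by simp))
    (X.ideal _ f (.of_forall fun x => by simp))

lemma n_zero_of_ae {f : α → ℝ} (h : f =ᵐ[μ] 0) : X.N f = 0 := by
  rw [X.n_congr_ae h, X.n_zero]

lemma n_const_mul (c : ℝ) (f : α → ℝ) :
    X.N (fun x => c * f x) = ENNReal.ofReal c * X.N f ∨ c < 0 := by
  by_cases hc : 0 ≤ c
  · left
    have h := X.n_smul c f
    have : (c • f) = fun x => c * f x := by funext x; simp [smul_eq_mul]
    rw [this] at h
    rw [h]
    congr 1
    simp only [Real.nnnorm_of_nonneg hc, ENNReal.ofReal]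
    congr 1
    exact (Real.toNNReal_of_nonneg hc).symm
  · right; linarith

lemma n_const_mul' {c : ℝ} (hc : 0 ≤ c) (f : α → ℝ) :
    X.N (fun x => c * f x) = ENNReal.ofReal c * X.N f := by
  have h := X.n_smul c f
  have hf : (c • f) = fun x => c * f x := by funext x; simp [smul_eq_mul]
  rw [hf] at h
  rw [h]
  congr 1
  simp only [Real.nnnorm_of_nonneg hc, ENNReal.ofReal]
  congr 1
  exact (Real.toNNReal_of_nonneg hc).symm

/-- Scaled Fatou. -/
lemma fatou_le {X : MeasLattice μ} (hXF : X.Fatou) (φ : ℕ → α → ℝ) (g : α → ℝ) (C : ℝ≥0∞)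
    (hn : ∀ n, X.N (φ n) ≤ C)
    (hconv : ∀ᵐ x ∂μ, Tendsto (fun n => φ n x) atTop (nhds (g x))) :
    X.N g ≤ C := by
  rcases eq_or_ne C ⊤ with rfl | hCtop
  · exact le_top
  rcases eq_or_ne C 0 with rfl | hC0
  · have hz : ∀ n, φ n =ᵐ[μ] 0 := fun n => X.n_eq_zero _ (le_antisymm (hn n) bot_le)
    have hg : g =ᵐ[μ] 0 := by
      have hall : ∀ᵐ x ∂μ, (∀ n, φ n x = 0) ∧ Tendsto (fun n => φ n x) atTop (nhds (g x)) :=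
        (ae_all_iff.2 hz).and hconv
      refine hall.mono fun x hx => ?_
      have h0 : Tendsto (fun _ : ℕ => (0 : ℝ)) atTop (nhds (g x)) := by
        simpa [hx.1] using hx.2
      exact tendsto_nhds_unique h0 tendsto_const_nhds
    exact le_of_eq (X.n_zero_of_ae hg)
  · set c : ℝ := C.toReal with hc
    have hcpos : 0 < c := ENNReal.toReal_pos hC0 hCtop
    have hCc : ENNReal.ofReal c = C := ENNReal.ofReal_toReal hCtop
    have h1 : ∀ n, X.N (fun x => c⁻¹ * φ n x) ≤ 1 := by
      intro n
      rw [X.n_const_mul' (le_of_lt (inv_pos.2 hcpos))]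
      rw [ENNReal.ofReal_inv_of_pos hcpos, hCc]
      calc C⁻¹ * X.N (φ n) ≤ C⁻¹ * C := mul_le_mul_right (hn n) _
        _ ≤ 1 := le_of_eq (ENNReal.inv_mul_cancel hC0 hCtop)
    have h2 : ∀ᵐ x ∂μ, Tendsto (fun n => c⁻¹ * φ n x) atTop (nhds (c⁻¹ * g x)) :=
      hconv.mono fun x hx => hx.const_mul _
    have h3 := hXF _ _ h1 h2
    have h4 : X.N g = ENNReal.ofReal c * X.N (fun x => c⁻¹ * g x) := by
      rw [← X.n_const_mul' hcpos.le]
      congr 1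
      funext x
      field_simp
    rw [h4, hCc]
    calc C * X.N (fun x => c⁻¹ * g x) ≤ C * 1 := mul_le_mul_right h3 _
      _ = C := mul_one _

/-- If a norm-bounded sequence of nonnegative functions tends to infinity on `P`,
then `P` is null. -/
lemma vanish_of_tendsto_atTop {X : MeasLattice μ} (hXF : X.Fatou) (θ : ℕ → α → ℝ)
    (C : ℝ≥0∞) (hCtop : C ≠ ⊤) (hn : ∀ n, X.N (θ n) ≤ C)
    (hpos : ∀ n, ∀ᵐ x ∂μ, 0 ≤ θ n x) (P : Set α)
    (hP : ∀ᵐ x ∂μ, x ∈ P → Tendsto (fun n => θ n x) atTop atTop) :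
    μ P = 0 := by
  have key : ∀ k : ℕ, X.N (fun x => ((k : ℝ) + 1) * P.indicator (fun _ => (1:ℝ)) x) ≤ C := by
    intro k
    set c : ℝ := (k : ℝ) + 1 with hcdef
    have hcpos : (0:ℝ) < c := by positivity
    refine fatou_le hXF (fun n x => min (θ n x) c * P.indicator (fun _ => (1:ℝ)) x) _ C ?_ ?_
    · intro n
      refine le_trans (X.ideal (θ n) _ ?_) (hn n)
      filter_upwards [hpos n] with x hx
      by_cases hxP : x ∈ P
      · simp only [Set.indicator_of_mem hxP, mul_one]
        rw [abs_of_nonneg (le_min hx hcpos.le), abs_of_nonneg hx]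
        exact min_le_left _ _
      · simp only [Set.indicator_of_notMem hxP, mul_zero, abs_zero]
        exact abs_nonneg _
    · filter_upwards [hP] with x hx
      by_cases hxP : x ∈ P
      · simp only [Set.indicator_of_mem hxP, mul_one]
        have : ∀ᶠ n in atTop, min (θ n x) c = c := by
          filter_upwards [(hx hxP).eventually_ge_atTop c] with n hnx
          exact min_eq_right hnx
        exact Tendsto.congr' (this.mono fun n h => h.symm) tendsto_const_nhds
      · simp only [Set.indicator_of_notMem hxP, mul_zero]
        exact tendsto_const_nhds
  have hind : ∀ k : ℕ, X.N (P.indicator (fun _ => (1:ℝ))) ≤ C / ((k:ℝ≥0∞) + 1) := by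
    intro k
    have h := key k
    rw [X.n_const_mul' (by positivity : (0:ℝ) ≤ (k:ℝ)+1)] at h
    have hof : ENNReal.ofReal ((k:ℝ)+1) = (k : ℝ≥0∞) + 1 := by
      rw [ENNReal.ofReal_add (by positivity) zero_le_one]
      simp [ENNReal.ofReal_natCast]
    rw [hof] at h
    rw [ENNReal.le_div_iff_mul_le (Or.inl (by simp)) (Or.inl (by simp))]
    rw [mul_comm]
    exact h
  set r := X.N (P.indicator (fun _ => (1:ℝ))) with hrdef
  have hzero : r = 0 := by
    by_contra hne
    have hrtop : r ≠ ⊤ := ne_top_of_le_ne_top hCtop (by simpa using hind 0)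
    obtain ⟨k, hk⟩ := ENNReal.exists_nat_gt ((ENNReal.div_lt_top hCtop hne).ne)
    have h2 : r ≤ C / ((k:ℝ≥0∞)+1) := hind k
    have h3 : C < ((k:ℝ≥0∞)+1) * r := by
      have hlt : C / r < (k:ℝ≥0∞) + 1 := hk.trans_le le_self_add
      rw [ENNReal.div_lt_iff (Or.inl hne) (Or.inl hrtop)] at hlt
      rw [mul_comm] at hlt ⊢
      exact hlt
    rw [ENNReal.le_div_iff_mul_le (Or.inl (by simp)) (Or.inl (by simp)), mul_comm] at h2
    exact absurd h2 (not_le.2 h3)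
  have hae := X.n_eq_zero _ hzero
  rw [Filter.EventuallyEq, ae_iff] at hae
  have hset : {x | ¬ P.indicator (fun _ => (1:ℝ)) x = (0 : α → ℝ) x} = P := by
    ext x
    by_cases hxP : x ∈ P <;> simp [Set.indicator_apply, hxP]
  rwa [hset] at hae

end MeasLattice

namespace MeasLattice

variable [MeasurableSpace α] {μ : Measure α}

lemma n_sum_le (X : MeasLattice μ) (hX1 : ∀ f g : α → ℝ, X.N (f + g) ≤ X.N f + X.N g)
    (M : ℕ) (c : ℕ → ℝ) (hc : ∀ i, 0 ≤ c i) (u : ℕ → α → ℝ) :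
    X.N (fun x => ∑ i ∈ Finset.range M, c i * u i x) ≤
      ∑ i ∈ Finset.range M, ENNReal.ofReal (c i) * X.N (u i) := by
  induction M with
  | zero =>
    simp only [Finset.range_zero, Finset.sum_empty]
    exact le_of_eq (X.n_zero)
  | succ M ih =>
    have hfun : (fun x => ∑ i ∈ Finset.range (M+1), c i * u i x)
        = (fun x => ∑ i ∈ Finset.range M, c i * u i x) + (fun x => c M * u M x) := by
      funext x
      simp [Finset.sum_range_succ]
    rw [hfun, Finset.sum_range_succ]
    refine le_trans (hX1 _ _) ?_
    exact add_le_add ih (le_of_eq (X.n_const_mul' (hc M) _))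

end MeasLattice

lemma summable_abs_of_sq_le {a : ℕ → ℝ} {C : ℝ} (h : ∀ j, (a j)^2 ≤ C * (2⁻¹:ℝ)^j) :
    Summable (fun j => |a j|) := by
  have hC : 0 ≤ C := le_trans (sq_nonneg (a 0)) (by simpa using h 0)
  set s : ℝ := Real.sqrt 2 with hsdef
  have hs0 : 0 < s := Real.sqrt_pos.2 (by norm_num)
  have hs1 : 1 < s := by
    have : Real.sqrt 1 < Real.sqrt 2 := Real.sqrt_lt_sqrt (by norm_num) (by norm_num)
    simpa using this
  have hs2 : s^2 = 2 := Real.sq_sqrt (by norm_num)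
  have hhalf : (2⁻¹ : ℝ) * s = s⁻¹ := by
    field_simp
    nlinarith [hs2]
  have hkey : ∀ j, |a j| ≤ (C+1) * (s⁻¹)^j := by
    intro j
    have ht : (0:ℝ) < s^j := pow_pos hs0 j
    have hclaim : |a j| ≤ (a j)^2 * s^j + (s^j)⁻¹ := by
      rcases le_or_gt (|a j|) (s^j)⁻¹ with hle | hlt
      · exact le_trans hle (le_add_of_nonneg_left (by positivity))
      · have h1 : 1 < |a j| * s^j := by
          calc (1:ℝ) = (s^j)⁻¹ * s^j := by field_simp
            _ < |a j| * s^j := by gcongr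
        have : |a j| * 1 ≤ |a j| * (|a j| * s^j) := by
          apply mul_le_mul_of_nonneg_left h1.le (abs_nonneg _)
        calc |a j| = |a j| * 1 := (mul_one _).symm
          _ ≤ |a j| * (|a j| * s^j) := this
          _ = (a j)^2 * s^j := by rw [show |a j| * (|a j| * s^j) = |a j|^2 * s^j by ring, sq_abs]
          _ ≤ (a j)^2 * s^j + (s^j)⁻¹ := le_add_of_nonneg_right (by positivity)
    have h2 : (a j)^2 * s^j ≤ C * (s⁻¹)^j := by
      calc (a j)^2 * s^j ≤ (C * (2⁻¹:ℝ)^j) * s^j := by gcongr; exact h j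
        _ = C * ((2⁻¹:ℝ) * s)^j := by rw [mul_pow]; ring
        _ = C * (s⁻¹)^j := by rw [hhalf]
    have h3 : (s^j)⁻¹ = (s⁻¹)^j := by rw [inv_pow]
    calc |a j| ≤ (a j)^2 * s^j + (s^j)⁻¹ := hclaim
      _ ≤ C * (s⁻¹)^j + 1 * (s⁻¹)^j := by rw [h3]; gcongr; simp
      _ = (C+1) * (s⁻¹)^j := by ring
  refine Summable.of_nonneg_of_le (fun j => abs_nonneg _) hkey ?_
  exact (summable_geometric_of_lt_one (by positivity) (inv_lt_one_of_one_lt₀ hs1)).mul_left _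

/-- If `X` and `Y` are Banach lattices of measurable functions on the same σ-finite
measure space, both having the Fatou property, then the infimum in the definition of the
product quasi-norm is attained: every `f ∈ XY` admits a factorization `f = g h` with
`g ∈ X`, `h ∈ Y` and `‖g‖_X ‖h‖_Y ≤ ‖f‖_{XY}`. -/
theorem exact_factorization [MeasurableSpace α] (μ : Measure α) [SigmaFinite μ]
    (X Y : MeasLattice μ)
    (hX : X.IsBanach) (hY : Y.IsBanach) (hXF : X.Fatou) (hYF : Y.Fatou)
    (f : α → ℝ)
    (hf : ∃ g₀ h₀ : α → ℝ, f =ᵐ[μ] g₀ * h₀ ∧ X.N g₀ ≠ ⊤ ∧ Y.N h₀ ≠ ⊤) :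
    ∃ g h : α → ℝ, f =ᵐ[μ] g * h ∧ X.N g * Y.N h ≤ mProd μ X.N Y.N f := by
  classical
  set I := mProd μ X.N Y.N f with hIdef
  have hIle : ∀ g h : α → ℝ, f =ᵐ[μ] g * h → I ≤ X.N g * Y.N h := by
    intro g h hgh
    rw [hIdef, mProd]
    exact iInf₂_le (g, h) hgh
  obtain ⟨g₀, h₀, hfac₀, hg₀, hh₀⟩ := hf
  have hItop : I ≠ ⊤ :=
    ne_top_of_le_ne_top (ENNReal.mul_ne_top hg₀ hh₀) (hIle g₀ h₀ hfac₀)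
  by_cases hae : f =ᵐ[μ] 0
  · refine ⟨0, 0, ?_, ?_⟩
    · refine hae.trans (.of_forall fun x => ?_)
      simp
    · simp [X.n_zero, Y.n_zero]
  -- approximation of the infimum
  have happrox : ∀ ε : ℝ≥0∞, I < ε →
      ∃ p : (α → ℝ) × (α → ℝ), f =ᵐ[μ] p.1 * p.2 ∧ X.N p.1 * Y.N p.2 < ε := by
    intro ε hε
    rw [hIdef, mProd] at hε
    obtain ⟨p, hp⟩ := iInf_lt_iff.mp hε
    obtain ⟨hfacp, hvp⟩ := iInf_lt_iff.mp hp
    exact ⟨p, hfacp, hvp⟩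
  set δ : ℕ → ℝ≥0∞ := fun n => ((n : ℝ≥0∞) + 1)⁻¹ with hδdef
  have hδpos : ∀ n, 0 < δ n := fun n => ENNReal.inv_pos.2 (by simp)
  have hδtop : ∀ n, δ n ≠ ⊤ := fun n => ENNReal.inv_ne_top.2 (by simp)
  have hδanti : ∀ m n, m ≤ n → δ n ≤ δ m := by
    intro m n h
    apply ENNReal.inv_le_inv.2
    gcongr
  have hδone : ∀ n, δ n ≤ 1 := fun n => by
    have := hδanti 0 n (Nat.zero_le n)
    simpa [hδdef] using this
  -- the minimizing sequence of factorizations, normalized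
  have hpair : ∀ n : ℕ, ∃ uv : (α → ℝ) × (α → ℝ), (∀ x, 0 ≤ uv.1 x) ∧ (∀ x, 0 ≤ uv.2 x) ∧
      ((fun x => uv.1 x * uv.2 x) =ᵐ[μ] fun x => |f x|) ∧
      X.N uv.1 ≤ 1 ∧ Y.N uv.2 ≤ I + δ n := by
    intro n
    obtain ⟨p, hp1, hp2⟩ := happrox (I + δ n) (ENNReal.lt_add_right hItop (hδpos n).ne')
    have hfab : f =ᵐ[μ] fun x => p.1 x * p.2 x := hp1
    have hXp1 : X.N p.1 ≠ 0 := by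
      intro h0
      apply hae
      have hz := X.n_eq_zero _ h0
      filter_upwards [hfab, hz] with x hx hzx
      simp only [Pi.zero_apply] at hzx ⊢
      rw [hx, hzx, zero_mul]
    have hYp2 : Y.N p.2 ≠ 0 := by
      intro h0
      apply hae
      have hz := Y.n_eq_zero _ h0
      filter_upwards [hfab, hz] with x hx hzx
      simp only [Pi.zero_apply] at hzx ⊢
      rw [hx, hzx, mul_zero]
    have hXp1top : X.N p.1 ≠ ⊤ := by
      intro htop
      rw [htop, ENNReal.top_mul hYp2] at hp2
      exact absurd hp2 (by simp)
    set c : ℝ := (X.N p.1).toReal with hcdef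
    have hcpos : 0 < c := ENNReal.toReal_pos hXp1 hXp1top
    have hofc : ENNReal.ofReal c = X.N p.1 := ENNReal.ofReal_toReal hXp1top
    refine ⟨⟨fun x => c⁻¹ * |p.1 x|, fun x => c * |p.2 x|⟩, ?_, ?_, ?_, ?_, ?_⟩
    · intro x; positivity
    · intro x; positivity
    · filter_upwards [hfab] with x hx
      rw [hx]
      rw [show c⁻¹ * |p.1 x| * (c * |p.2 x|) = (c⁻¹ * c) * (|p.1 x| * |p.2 x|) by ring,
        inv_mul_cancel₀ hcpos.ne', one_mul, ← abs_mul]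
    · simp only
      rw [X.n_const_mul' (inv_nonneg.2 hcpos.le), X.n_abs,
        ENNReal.ofReal_inv_of_pos hcpos, hofc]
      exact le_of_eq (ENNReal.inv_mul_cancel hXp1 hXp1top)
    · simp only
      rw [Y.n_const_mul' hcpos.le, Y.n_abs, hofc]
      exact hp2.le
  choose uv hu0 hv0 huvf huX hvY using hpair
  set u : ℕ → α → ℝ := fun n => (uv n).1 with hudef
  set v : ℕ → α → ℝ := fun n => (uv n).2 with hvdef
  -- a finite measure equivalent to μ
  obtain ⟨ν, hνfin, hμν, hνμ⟩ := MeasureTheory.exists_isFiniteMeasure_absolutelyContinuous μ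
  haveI := hνfin
  have humeas : ∀ n, AEMeasurable (u n) ν :=
    fun n => (X.meas _ (ne_top_of_le_ne_top ENNReal.one_ne_top (huX n))).mono_ac hνμ
  -- convex combinations of the tail
  set D : ℕ → (α → ℝ) → Prop := fun n w => ∃ M : ℕ, ∃ c : ℕ → ℝ,
    (∀ i, 0 ≤ c i) ∧ (∀ i, i < n → c i = 0) ∧ (∀ i, M ≤ i → c i = 0) ∧
    (∑ i ∈ Finset.range M, c i) = 1 ∧ (w = fun x => ∑ i ∈ Finset.range M, c i * u i x)
    with hDdef
  have hDself : ∀ n, D n (u n) := by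
    intro n
    refine ⟨n + 1, fun i => if i = n then 1 else 0, ?_, ?_, ?_, ?_, ?_⟩
    · intro i; rcases eq_or_ne i n with h | h <;> simp [h]
    · intro i hi; simp [Nat.ne_of_lt hi]
    · intro i hi; simp [Nat.ne_of_gt hi]
    · rw [Finset.sum_eq_single n]
      · simp
      · intro i _ hin; simp [hin]
      · intro hn; exact absurd (Finset.self_mem_range_succ n) hn
    · funext x
      rw [Finset.sum_eq_single n]
      · simp
      · intro i _ hin; simp [hin]
      · intro hn; exact absurd (Finset.self_mem_range_succ n) hn
  have hDmono : ∀ m n, m ≤ n → ∀ w, D n w → D m w := by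
    rintro m n hmn w ⟨M, c, h1, h2, h3, h4, h5⟩
    exact ⟨M, c, h1, fun i hi => h2 i (lt_of_lt_of_le hi hmn), h3, h4, h5⟩
  have hDmid : ∀ n w₁ w₂, D n w₁ → D n w₂ → D n (fun x => (w₁ x + w₂ x) / 2) := by
    rintro n w₁ w₂ ⟨M₁, c₁, h1a, h1b, h1c, h1d, h1e⟩ ⟨M₂, c₂, h2a, h2b, h2c, h2d, h2e⟩
    have hext : ∀ (M M' : ℕ) (c : ℕ → ℝ), M ≤ M' → (∀ i, M ≤ i → c i = 0) →
        ∀ g : ℕ → ℝ, ∑ i ∈ Finset.range M', c i * g i = ∑ i ∈ Finset.range M, c i * g i := by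
      intro M M' c hMM hz g
      symm
      apply Finset.sum_subset (Finset.range_subset_range.2 hMM)
      intro i _ hi
      rw [hz i (by simpa using hi), zero_mul]
    refine ⟨max M₁ M₂, fun i => (c₁ i + c₂ i) / 2, ?_, ?_, ?_, ?_, ?_⟩
    · intro i
      show 0 ≤ (c₁ i + c₂ i) / 2
      have := h1a i; have := h2a i; positivity
    · intro i hi
      show (c₁ i + c₂ i) / 2 = 0
      rw [h1b i hi, h2b i hi]; norm_num
    · intro i hi
      show (c₁ i + c₂ i) / 2 = 0
      rw [h1c i (le_trans (le_max_left _ _) hi), h2c i (le_trans (le_max_right _ _) hi)]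
      norm_num
    · have e1 : ∑ i ∈ Finset.range (max M₁ M₂), c₁ i * 1 = ∑ i ∈ Finset.range M₁, c₁ i * 1 :=
        hext M₁ _ c₁ (le_max_left _ _) h1c _
      have e2 : ∑ i ∈ Finset.range (max M₁ M₂), c₂ i * 1 = ∑ i ∈ Finset.range M₂, c₂ i * 1 :=
        hext M₂ _ c₂ (le_max_right _ _) h2c _
      simp only [mul_one] at e1 e2
      have hgoal : ∑ i ∈ Finset.range (max M₁ M₂), (c₁ i + c₂ i) / 2
          = (∑ i ∈ Finset.range (max M₁ M₂), c₁ i + ∑ i ∈ Finset.range (max M₁ M₂), c₂ i) / 2 := by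
        rw [← Finset.sum_div, Finset.sum_add_distrib]
      show ∑ i ∈ Finset.range (max M₁ M₂), (c₁ i + c₂ i) / 2 = 1
      rw [hgoal, e1, e2, h1d, h2d]
      norm_num
    · funext x
      have e1 : w₁ x = ∑ i ∈ Finset.range (max M₁ M₂), c₁ i * u i x := by
        rw [h1e]
        exact (hext M₁ _ c₁ (le_max_left _ _) h1c _).symm
      have e2 : w₂ x = ∑ i ∈ Finset.range (max M₂ M₂), c₂ i * u i x := by
        rw [h2e]
        exact (hext M₂ (max M₂ M₂) c₂ (le_max_right _ _) h2c _).symm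
      have e2' : w₂ x = ∑ i ∈ Finset.range (max M₁ M₂), c₂ i * u i x := by
        rw [h2e]
        exact (hext M₂ _ c₂ (le_max_right _ _) h2c _).symm
      show (w₁ x + w₂ x) / 2 = ∑ i ∈ Finset.range (max M₁ M₂), (c₁ i + c₂ i) / 2 * u i x
      rw [e1, e2', ← Finset.sum_add_distrib, Finset.sum_div]
      apply Finset.sum_congr rfl
      intro i _
      ring
  have hDnn : ∀ n w, D n w → ∀ x, 0 ≤ w x := by
    rintro n w ⟨M, c, h1, h2, h3, h4, h5⟩ x
    rw [h5]
    exact Finset.sum_nonneg fun i _ => mul_nonneg (h1 i) (hu0 i x)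
  have hDX : ∀ n w, D n w → X.N w ≤ 1 := by
    rintro n w ⟨M, c, h1, h2, h3, h4, h5⟩
    rw [h5]
    refine le_trans (X.n_sum_le hX.1 M c h1 u) ?_
    calc ∑ i ∈ Finset.range M, ENNReal.ofReal (c i) * X.N (u i)
        ≤ ∑ i ∈ Finset.range M, ENNReal.ofReal (c i) * 1 := by
          exact Finset.sum_le_sum fun i _ => mul_le_mul_right (huX i) _
      _ = ENNReal.ofReal (∑ i ∈ Finset.range M, c i) := by
          rw [ENNReal.ofReal_sum_of_nonneg fun i _ => h1 i]
          simp
      _ = 1 := by rw [h4]; simp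
  have hDmeas : ∀ n w, D n w → AEMeasurable w ν := by
    rintro n w ⟨M, c, h1, h2, h3, h4, h5⟩
    rw [h5]
    exact Finset.aemeasurable_fun_sum _ fun i _ => (humeas i).const_mul _
  have hDpartner : ∀ n w, D n w → ∃ z : α → ℝ, (∀ x, 0 ≤ z x) ∧ Y.N z ≤ I + δ n ∧
      (∀ᵐ x ∂μ, |f x| ≤ w x * z x) := by
    rintro n w ⟨M, c, h1, h2, h3, h4, h5⟩
    refine ⟨fun x => ∑ i ∈ Finset.range M, c i * v i x, ?_, ?_, ?_⟩
    · intro x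
      exact Finset.sum_nonneg fun i _ => mul_nonneg (h1 i) (hv0 i x)
    · refine le_trans (Y.n_sum_le hY.1 M c h1 v) ?_
      calc ∑ i ∈ Finset.range M, ENNReal.ofReal (c i) * Y.N (v i)
          ≤ ∑ i ∈ Finset.range M, ENNReal.ofReal (c i) * (I + δ n) := by
            refine Finset.sum_le_sum fun i _ => ?_
            rcases lt_or_ge i n with hin | hin
            · rw [h2 i hin]; simp
            · exact mul_le_mul_right (le_trans (hvY i) (add_le_add_right (hδanti n i hin) I)) _
        _ = ENNReal.ofReal (∑ i ∈ Finset.range M, c i) * (I + δ n) := by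
            rw [ENNReal.ofReal_sum_of_nonneg fun i _ => h1 i, Finset.sum_mul]
        _ = I + δ n := by rw [h4]; simp
    · have hall : ∀ᵐ x ∂μ, ∀ i, u i x * v i x = |f x| := by
        rw [ae_all_iff]
        intro i
        exact huvf i
      filter_upwards [hall] with x hx
      rw [h5]
      have hCS := Finset.sum_sq_le_sum_mul_sum_of_sq_eq_mul (Finset.range M)
        (r := fun i => c i * Real.sqrt |f x|) (f := fun i => c i * u i x)
        (g := fun i => c i * v i x)
        (fun i _ => mul_nonneg (h1 i) (hu0 i x))
        (fun i _ => mul_nonneg (h1 i) (hv0 i x))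
        (fun i _ => by
          rw [mul_pow, Real.sq_sqrt (abs_nonneg (f x))]
          rw [show c i * u i x * (c i * v i x) = c i ^ 2 * (u i x * v i x) by ring, hx i])
      have hlhs : (∑ i ∈ Finset.range M, c i * Real.sqrt |f x|) ^ 2 = |f x| := by
        rw [← Finset.sum_mul, h4, one_mul, Real.sq_sqrt (abs_nonneg (f x))]
      rw [hlhs] at hCS
      exact hCS
  -- the variational functional
  set E : (α → ℝ) → ℝ≥0∞ := fun w => ∫⁻ x, ENNReal.ofReal (Real.exp (-(w x))) ∂ν with hEdef
  set aN : ℕ → ℝ≥0∞ := fun n => ⨅ (w : α → ℝ) (_ : D n w), E w with haNdef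
  have haN_le : ∀ n w, D n w → aN n ≤ E w := fun n w hw => iInf₂_le w hw
  have hEle : ∀ w : α → ℝ, (∀ x, 0 ≤ w x) → E w ≤ ν Set.univ := by
    intro w hw
    rw [hEdef]
    calc ∫⁻ x, ENNReal.ofReal (Real.exp (-(w x))) ∂ν ≤ ∫⁻ _, 1 ∂ν := by
          refine lintegral_mono fun x => ?_
          rw [show (1:ℝ≥0∞) = ENNReal.ofReal 1 by simp]
          exact ENNReal.ofReal_le_ofReal (Real.exp_le_one_iff.2 (by linarith [hw x]))
      _ = ν Set.univ := by simp
  have haN_fin : ∀ n, aN n ≤ ν Set.univ := fun n =>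
    le_trans (haN_le n (u n) (hDself n)) (hEle _ (hu0 n))
  have haN_top : ∀ n, aN n ≠ ⊤ := fun n => ne_top_of_le_ne_top (measure_ne_top ν _) (haN_fin n)
  set A : ℝ≥0∞ := ⨆ n, aN n with hAdef
  have hA_top : A ≠ ⊤ := by
    rw [hAdef]
    exact ne_top_of_le_ne_top (measure_ne_top ν _) (iSup_le haN_fin)
  have hA_ge : ∀ n, aN n ≤ A := fun n => le_iSup aN n
  have hA_approx : ∀ ε : ℝ≥0∞, 0 < ε → ∃ n, A ≤ aN n + ε := by
    intro ε hε
    by_contra hcon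
    push_neg at hcon
    have h2 : A + ε ≤ A := by
      calc A + ε = ⨆ n, (aN n + ε) := by rw [hAdef, ENNReal.iSup_add]
        _ ≤ A := iSup_le fun n => (hcon n).le
    exact absurd (ENNReal.lt_add_right hA_top hε.ne') (not_lt.2 h2)
  -- select near-minimizers
  have hwsel : ∀ n, ∃ w, D n w ∧ E w ≤ aN n + δ n := by
    intro n
    have hlt : aN n < aN n + δ n := ENNReal.lt_add_right (haN_top n) (hδpos n).ne'
    have hlt2 : ⨅ (w : α → ℝ) (_ : D n w), E w < aN n + δ n := hlt
    obtain ⟨w, hw⟩ := iInf_lt_iff.mp hlt2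
    obtain ⟨hDw, hww⟩ := iInf_lt_iff.mp hw
    exact ⟨w, hDw, hww.le⟩
  choose w hwD hwE using hwsel
  set p : ℕ → α → ℝ := fun n x => Real.exp (-(w n x) / 2) with hpdef
  have hp_pos : ∀ n x, 0 < p n x := fun n x => Real.exp_pos _
  have hp_le1 : ∀ n x, p n x ≤ 1 := fun n x =>
    Real.exp_le_one_iff.2 (by have := hDnn n (w n) (hwD n) x; linarith)
  have hpmeas : ∀ n, AEMeasurable (p n) ν := fun n =>
    Real.measurable_exp.comp_aemeasurable (((hDmeas n (w n) (hwD n)).neg).div_const 2)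
  have hsqint : ∀ k : ℕ, ∫⁻ x, ENNReal.ofReal ((p k x)^2) ∂ν = E (w k) := by
    intro k
    rw [hEdef]
    refine lintegral_congr fun x => ?_
    congr 1
    rw [hpdef]
    simp only
    rw [sq, ← Real.exp_add]
    congr 1
    ring
  have hCauchy : ∀ ε : ℝ≥0∞, 0 < ε → ε ≠ ⊤ → ∃ Nc : ℕ, ∀ m, Nc ≤ m → ∀ n, Nc ≤ n →
      ∫⁻ x, ENNReal.ofReal ((p m x - p n x)^2) ∂ν ≤ ε := by
    intro ε hε hεtop
    set ε4 : ℝ≥0∞ := ε / 4 with hε4def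
    have hε4pos : 0 < ε4 := ENNReal.div_pos hε.ne' (by norm_num)
    obtain ⟨N₁, hN₁⟩ := hA_approx ε4 hε4pos
    obtain ⟨N₂, hN₂⟩ : ∃ N₂ : ℕ, δ N₂ ≤ ε4 := by
      obtain ⟨k, hk⟩ := ENNReal.exists_inv_nat_lt hε4pos.ne'
      refine ⟨k, le_trans ?_ hk.le⟩
      apply ENNReal.inv_le_inv.2
      exact_mod_cast Nat.le_succ k
    refine ⟨max N₁ N₂, ?_⟩
    intro m hm n hn
    have hmid : D N₁ (fun x => (w m x + w n x) / 2) :=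
      hDmid N₁ _ _ (hDmono N₁ m (le_trans (le_max_left _ _) hm) _ (hwD m))
        (hDmono N₁ n (le_trans (le_max_left _ _) hn) _ (hwD n))
    set K : ℝ≥0∞ := ∫⁻ x, ENNReal.ofReal (p m x * p n x) ∂ν with hKdef
    have hintmid : aN N₁ ≤ K := by
      refine le_trans (haN_le N₁ _ hmid) (le_of_eq ?_)
      rw [hEdef, hKdef]
      refine lintegral_congr fun x => ?_
      congr 1
      rw [hpdef]
      simp only
      rw [← Real.exp_add]
      congr 1
      ring
    have hKtop : K ≠ ⊤ := by
      refine ne_top_of_le_ne_top (measure_ne_top ν Set.univ) ?_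
      rw [hKdef]
      calc ∫⁻ x, ENNReal.ofReal (p m x * p n x) ∂ν ≤ ∫⁻ _, 1 ∂ν := by
            refine lintegral_mono fun x => ?_
            rw [show (1:ℝ≥0∞) = ENNReal.ofReal 1 by simp]
            refine ENNReal.ofReal_le_ofReal ?_
            exact mul_le_one₀ (hp_le1 m x) (hp_pos n x).le (hp_le1 n x)
        _ = ν Set.univ := by simp
    have haemul : AEMeasurable (fun x => ENNReal.ofReal (p m x * p n x)) ν :=
      ENNReal.measurable_ofReal.comp_aemeasurable ((hpmeas m).mul (hpmeas n))
    have haeΔ : AEMeasurable (fun x => ENNReal.ofReal ((p m x - p n x)^2)) ν :=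
      ENNReal.measurable_ofReal.comp_aemeasurable (((hpmeas m).sub (hpmeas n)).pow_const 2)
    have hkey : (∫⁻ x, ENNReal.ofReal ((p m x - p n x)^2) ∂ν) + 2 * K
        = (∫⁻ x, ENNReal.ofReal ((p m x)^2) ∂ν) + ∫⁻ x, ENNReal.ofReal ((p n x)^2) ∂ν := by
      have h2 : (2:ℝ≥0∞) * K = ∫⁻ x, ENNReal.ofReal (2 * (p m x * p n x)) ∂ν := by
        rw [hKdef, ← lintegral_const_mul'' 2 haemul]
        refine lintegral_congr fun x => ?_
        rw [ENNReal.ofReal_mul (by norm_num : (0:ℝ) ≤ 2)]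
        norm_num
      rw [h2]
      have haem2 : AEMeasurable (fun x => ENNReal.ofReal ((p m x)^2)) ν :=
        ENNReal.measurable_ofReal.comp_aemeasurable ((hpmeas m).pow_const 2)
      rw [← lintegral_add_left' haeΔ, ← lintegral_add_left' haem2]
      refine lintegral_congr fun x => ?_
      rw [← ENNReal.ofReal_add (sq_nonneg _) (by positivity),
        ← ENNReal.ofReal_add (sq_nonneg _) (sq_nonneg _)]
      congr 1
      ring
    have hδm : δ m ≤ ε4 := le_trans (hδanti N₂ m (le_trans (le_max_right _ _) hm)) hN₂
    have hδn : δ n ≤ ε4 := le_trans (hδanti N₂ n (le_trans (le_max_right _ _) hn)) hN₂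
    have hup : (∫⁻ x, ENNReal.ofReal ((p m x - p n x)^2) ∂ν) + 2 * K ≤ ε + 2 * K := by
      rw [hkey]
      calc (∫⁻ x, ENNReal.ofReal ((p m x)^2) ∂ν) + ∫⁻ x, ENNReal.ofReal ((p n x)^2) ∂ν
          = E (w m) + E (w n) := by rw [hsqint m, hsqint n]
        _ ≤ (aN m + δ m) + (aN n + δ n) := add_le_add (hwE m) (hwE n)
        _ ≤ (A + ε4) + (A + ε4) := by
            refine add_le_add (add_le_add (hA_ge m) hδm) (add_le_add (hA_ge n) hδn)
        _ ≤ ((aN N₁ + ε4) + ε4) + ((aN N₁ + ε4) + ε4) := by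
            refine add_le_add (add_le_add_left hN₁ _) (add_le_add_left hN₁ _)
        _ = (4 * ε4) + (aN N₁ + aN N₁) := by ring
        _ ≤ ε + (K + K) := by
            refine add_le_add (le_of_eq ?_) (add_le_add hintmid hintmid)
            rw [hε4def]
            rw [mul_comm]
            exact ENNReal.div_mul_cancel (by norm_num) (by norm_num)
        _ = ε + 2 * K := by ring
    exact (ENNReal.add_le_add_iff_right (ENNReal.mul_ne_top (by norm_num) hKtop)).mp hup
  -- extraction of a subsequence with summable increments
  have hexistsN : ∀ j : ℕ, ∃ Nc : ℕ, ∀ m, Nc ≤ m → ∀ n, Nc ≤ n →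
      ∫⁻ x, ENNReal.ofReal ((p m x - p n x)^2) ∂ν ≤ (2⁻¹ : ℝ≥0∞)^(3*j) := fun j =>
    hCauchy _ (ENNReal.pow_pos (by norm_num) _) (ENNReal.pow_ne_top (by norm_num))
  choose Nc hNc using hexistsN
  set nk : ℕ → ℕ := fun j => Nat.rec (Nc 0) (fun j prev => max (prev + 1) (Nc (j+1))) j
    with hnkdef
  have hnk_succ : ∀ j, nk (j+1) = max (nk j + 1) (Nc (j+1)) := fun j => rfl
  have hnk_mono : StrictMono nk := strictMono_nat_of_lt_succ fun j => by
    rw [hnk_succ]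
    exact lt_of_lt_of_le (Nat.lt_succ_self _) (le_max_left _ _)
  have hnk_ge : ∀ j, Nc j ≤ nk j := by
    intro j
    cases j with
    | zero => exact le_refl _
    | succ j => rw [hnk_succ]; exact le_max_right _ _
  have hnk_inc : ∀ j, ∫⁻ x, ENNReal.ofReal ((p (nk (j+1)) x - p (nk j) x)^2) ∂ν
      ≤ (2⁻¹:ℝ≥0∞)^(3*j) := by
    intro j
    refine hNc j _ ?_ _ (hnk_ge j)
    calc Nc j ≤ nk j := hnk_ge j
      _ ≤ nk (j+1) := (hnk_mono (Nat.lt_succ_self j)).le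
  have haeΔ' : ∀ j : ℕ, AEMeasurable
      (fun x => ENNReal.ofReal ((p (nk (j+1)) x - p (nk j) x)^2)) ν := fun j =>
    ENNReal.measurable_ofReal.comp_aemeasurable
      (((hpmeas (nk (j+1))).sub (hpmeas (nk j))).pow_const 2)
  have htsum : ∫⁻ x, ∑' j, (2:ℝ≥0∞)^j * ENNReal.ofReal ((p (nk (j+1)) x - p (nk j) x)^2) ∂ν
      ≠ ⊤ := by
    rw [lintegral_tsum fun j => (haeΔ' j).const_mul _]
    have hbound : ∀ j : ℕ,
        (∫⁻ x, (2:ℝ≥0∞)^j * ENNReal.ofReal ((p (nk (j+1)) x - p (nk j) x)^2) ∂ν)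
        ≤ (4⁻¹ : ℝ≥0∞)^j := by
      intro j
      rw [lintegral_const_mul'' _ (haeΔ' j)]
      calc (2:ℝ≥0∞)^j * ∫⁻ x, ENNReal.ofReal ((p (nk (j+1)) x - p (nk j) x)^2) ∂ν
          ≤ (2:ℝ≥0∞)^j * (2⁻¹:ℝ≥0∞)^(3*j) := mul_le_mul_right (hnk_inc j) _
        _ = (4⁻¹:ℝ≥0∞)^j := by
            rw [pow_mul, ← mul_pow]
            congr 1
            rw [show ((2:ℝ≥0∞)⁻¹)^3 = ((2:ℝ≥0∞)^3)⁻¹ by rw [ENNReal.inv_pow]]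
            rw [show ((2:ℝ≥0∞))^3 = 2 * 4 by norm_num]
            rw [ENNReal.mul_inv (Or.inl (by norm_num)) (Or.inl (by norm_num))]
            rw [← mul_assoc, ENNReal.mul_inv_cancel (by norm_num) (by norm_num), one_mul]
    refine ne_top_of_le_ne_top ?_ (ENNReal.tsum_le_tsum hbound)
    rw [ENNReal.tsum_geometric]
    refine ENNReal.inv_ne_top.2 ?_
    rw [ne_eq, tsub_eq_zero_iff_le, not_le]
    exact ENNReal.inv_lt_one.2 (by norm_num)
  have hsum_ae : ∀ᵐ x ∂ν,
      (∑' j, (2:ℝ≥0∞)^j * ENNReal.ofReal ((p (nk (j+1)) x - p (nk j) x)^2)) < ⊤ :=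
    ae_lt_top' (AEMeasurable.ennreal_tsum fun j => (haeΔ' j).const_mul _) htsum
  have hsum_aeμ : ∀ᵐ x ∂μ,
      (∑' j, (2:ℝ≥0∞)^j * ENNReal.ofReal ((p (nk (j+1)) x - p (nk j) x)^2)) < ⊤ :=
    hμν.ae_le hsum_ae
  have hcauchy_pt : ∀ᵐ x ∂μ, CauchySeq (fun j => p (nk j) x) := by
    filter_upwards [hsum_aeμ] with x hx
    set T := ∑' j, (2:ℝ≥0∞)^j * ENNReal.ofReal ((p (nk (j+1)) x - p (nk j) x)^2) with hTdef
    have hsq : ∀ j, (p (nk (j+1)) x - p (nk j) x)^2 ≤ T.toReal * (2⁻¹:ℝ)^j := by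
      intro j
      have h1 : (2:ℝ≥0∞)^j * ENNReal.ofReal ((p (nk (j+1)) x - p (nk j) x)^2) ≤ T :=
        ENNReal.le_tsum j
      have h2 : ENNReal.ofReal ((p (nk (j+1)) x - p (nk j) x)^2) ≤ T / (2:ℝ≥0∞)^j := by
        rw [ENNReal.le_div_iff_mul_le (Or.inl (by positivity)) (Or.inl (by
          exact ENNReal.pow_ne_top (by norm_num)))]
        rw [mul_comm]
        exact h1
      have h3 : T / (2:ℝ≥0∞)^j ≠ ⊤ :=
        (ENNReal.div_lt_top hx.ne (by positivity)).ne
      calc (p (nk (j+1)) x - p (nk j) x)^2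
          = (ENNReal.ofReal ((p (nk (j+1)) x - p (nk j) x)^2)).toReal := by
            rw [ENNReal.toReal_ofReal (sq_nonneg _)]
        _ ≤ (T / (2:ℝ≥0∞)^j).toReal := ENNReal.toReal_mono h3 h2
        _ = T.toReal * (2⁻¹:ℝ)^j := by
            rw [ENNReal.toReal_div, div_eq_mul_inv]
            congr 1
            rw [ENNReal.toReal_pow, ← inv_pow]
            norm_num
    have hsumm := summable_abs_of_sq_le hsq
    apply cauchySeq_of_summable_dist
    refine Summable.congr hsumm fun j => ?_
    rw [Real.dist_eq, abs_sub_comm]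
  -- the limit function
  set q : α → ℝ := fun x => limUnder atTop (fun j => p (nk j) x) with hqdef
  have hqconv : ∀ᵐ x ∂μ, Tendsto (fun j => p (nk j) x) atTop (nhds (q x)) := by
    filter_upwards [hcauchy_pt] with x hx
    exact tendsto_nhds_limUnder (cauchySeq_tendsto_of_complete hx)
  -- the set where w (nk j) tends to infinity is null
  set P₁ : Set α := {x | Tendsto (fun j => w (nk j) x) atTop atTop} with hP₁def
  have hP₁null : μ P₁ = 0 := by
    refine MeasLattice.vanish_of_tendsto_atTop hXF (fun j => w (nk j)) 1 (by norm_num)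
      (fun j => hDX _ _ (hwD (nk j)))
      (fun j => .of_forall fun x => hDnn _ _ (hwD (nk j)) x) P₁ ?_
    exact .of_forall fun x hx => hx
  have hwlog : ∀ j x, w (nk j) x = -2 * Real.log (p (nk j) x) := by
    intro j x
    rw [hpdef]
    simp only
    rw [Real.log_exp]
    ring
  have hwconv : ∀ᵐ x ∂μ, 0 < q x ∧ q x ≤ 1 ∧
      Tendsto (fun j => w (nk j) x) atTop (nhds (-(2 * Real.log (q x)))) := by
    filter_upwards [hqconv, measure_eq_zero_iff_ae_notMem.mp hP₁null] with x hx hxP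
    have hq0 : 0 ≤ q x := ge_of_tendsto' hx fun j => (hp_pos _ x).le
    have hq1 : q x ≤ 1 := le_of_tendsto' hx fun j => hp_le1 _ x
    have hqpos : 0 < q x := by
      rcases hq0.lt_or_eq with h | h
      · exact h
      · exfalso
        apply hxP
        have hp0 : Tendsto (fun j => p (nk j) x) atTop (nhds 0) := by rw [h]; exact hx
        have hlog : Tendsto (fun j => Real.log (p (nk j) x)) atTop atBot :=
          Real.tendsto_log_nhdsGT_zero.comp
            (tendsto_nhdsWithin_iff.2 ⟨hp0, .of_forall fun j => hp_pos _ x⟩)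
        show Tendsto (fun j => w (nk j) x) atTop atTop
        refine Tendsto.congr (fun j => (hwlog j x).symm) ?_
        exact tendsto_const_mul_atTop_of_neg (by norm_num : (-2:ℝ) < 0) |>.2 hlog
    refine ⟨hqpos, hq1, ?_⟩
    have hlogconv : Tendsto (fun j => Real.log (p (nk j) x)) atTop (nhds (Real.log (q x))) :=
      ((Real.continuousAt_log hqpos.ne').tendsto).comp hx
    refine Tendsto.congr (fun j => (hwlog j x).symm) ?_
    have h2 := hlogconv.const_mul (-2 : ℝ)
    convert h2 using 2
    ring
  set uu : α → ℝ := fun x => if q x ≤ 0 then 0 else -(2 * Real.log (q x)) with huudef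
  have huuconv : ∀ᵐ x ∂μ, Tendsto (fun j => w (nk j) x) atTop (nhds (uu x)) := by
    filter_upwards [hwconv] with x hx
    obtain ⟨h1, _, h3⟩ := hx
    rw [huudef]
    simp only [if_neg (not_le.2 h1)]
    exact h3
  have huu0 : ∀ᵐ x ∂μ, 0 ≤ uu x := by
    filter_upwards [hwconv] with x hx
    obtain ⟨h1, h2, _⟩ := hx
    rw [huudef]
    simp only [if_neg (not_le.2 h1)]
    have := Real.log_nonpos h1.le h2
    linarith
  have huuX : X.N uu ≤ 1 :=
    hXF (fun j => w (nk j)) uu (fun j => hDX _ _ (hwD (nk j))) huuconv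
  -- the partner functions
  choose z hz0 hzY hzCS using fun j => hDpartner (nk j) (w (nk j)) (hwD (nk j))
  have hwpos : ∀ j, ∀ᵐ x ∂μ, f x ≠ 0 → 0 < w (nk j) x := by
    intro j
    filter_upwards [hzCS j] with x hx hfx
    rcases (hDnn _ _ (hwD (nk j)) x).lt_or_eq with h | h
    · exact h
    · exfalso
      rw [← h, zero_mul] at hx
      exact hfx (abs_eq_zero.mp (le_antisymm hx (abs_nonneg _)))
  set θ : ℕ → α → ℝ := fun j x => if f x = 0 then 0 else |f x| / w (nk j) x with hθdef
  have hθ0 : ∀ j x, 0 ≤ θ j x := by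
    intro j x
    rw [hθdef]
    simp only
    split
    · exact le_refl 0
    · exact div_nonneg (abs_nonneg _) (hDnn _ _ (hwD (nk j)) x)
  have hθY : ∀ j, Y.N (θ j) ≤ I + δ (nk j) := by
    intro j
    refine le_trans (Y.ideal (z j) (θ j) ?_) (hzY j)
    filter_upwards [hzCS j, hwpos j] with x hx hwx
    rw [abs_of_nonneg (hθ0 j x), abs_of_nonneg (hz0 j x), hθdef]
    simp only
    split
    · exact hz0 j x
    · next hfx =>
      rw [div_le_iff₀ (hwx hfx), mul_comm]
      exact hx
  set P₂ : Set α := {x | Tendsto (fun j => θ j x) atTop atTop} with hP₂def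
  have hP₂null : μ P₂ = 0 := by
    refine MeasLattice.vanish_of_tendsto_atTop hYF θ (I + 1)
      (by rw [ne_eq, ENNReal.add_eq_top]; push_neg; exact ⟨hItop, by norm_num⟩)
      (fun j => le_trans (hθY j) (add_le_add_right (hδone _) I))
      (fun j => .of_forall (hθ0 j)) P₂ ?_
    exact .of_forall fun x hx => hx
  set hh : α → ℝ := fun x => if uu x = 0 then 0 else f x / uu x with hhdef
  have hkey : ∀ᵐ x ∂μ, Tendsto (fun j => θ j x) atTop (nhds |hh x|) ∧ f x = uu x * hh x := by
    filter_upwards [huuconv, huu0, ae_all_iff.2 hwpos,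
      measure_eq_zero_iff_ae_notMem.mp hP₂null] with x hconvw huux hwposx hxP₂
    by_cases hfx : f x = 0
    · have hθz : ∀ j, θ j x = 0 := fun j => by rw [hθdef]; simp [hfx]
      have hhz : hh x = 0 := by
        rw [hhdef]
        simp only
        split
        · rfl
        · rw [hfx, zero_div]
      constructor
      · rw [hhz, abs_zero]
        exact Tendsto.congr (fun j => (hθz j).symm) tendsto_const_nhds
      · rw [hhz, mul_zero, hfx]
    · have huune : uu x ≠ 0 := by
        intro h0
        apply hxP₂
        show Tendsto (fun j => θ j x) atTop atTop
        have hw0 : Tendsto (fun j => w (nk j) x) atTop (nhds 0) := by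
          rw [← h0]; exact hconvw
        have hwin : Tendsto (fun j => w (nk j) x) atTop (nhdsWithin 0 (Set.Ioi 0)) :=
          tendsto_nhdsWithin_iff.2 ⟨hw0, .of_forall fun j => hwposx j hfx⟩
        have hinv : Tendsto (fun j => (w (nk j) x)⁻¹) atTop atTop :=
          tendsto_inv_nhdsGT_zero.comp hwin
        have hmul : Tendsto (fun j => |f x| * (w (nk j) x)⁻¹) atTop atTop :=
          Tendsto.const_mul_atTop (abs_pos.2 hfx) hinv
        refine Tendsto.congr (fun j => ?_) hmul
        rw [hθdef]
        simp only [if_neg hfx]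
        rw [div_eq_mul_inv]
      have huupos : 0 < uu x := lt_of_le_of_ne huux (Ne.symm huune)
      have hhval : hh x = f x / uu x := by rw [hhdef]; simp only [if_neg huune]
      constructor
      · have h1 : Tendsto (fun j => |f x| / w (nk j) x) atTop (nhds (|f x| / uu x)) :=
          tendsto_const_nhds.div hconvw huune
        have h2 : |hh x| = |f x| / uu x := by
          rw [hhval, abs_div, abs_of_pos huupos]
        rw [h2]
        refine Tendsto.congr (fun j => ?_) h1
        rw [hθdef]
        simp only [if_neg hfx]
      · rw [hhval, mul_div_cancel₀ _ huune]
  have hhY : Y.N hh ≤ I := by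
    have hm : ∀ m : ℕ, Y.N hh ≤ I + δ (nk m) := by
      intro m
      rw [← Y.n_abs]
      refine MeasLattice.fatou_le hYF (fun j => θ (j + m)) (fun x => |hh x|)
        (I + δ (nk m)) ?_ ?_
      · intro j
        refine le_trans (hθY (j+m)) (add_le_add_right ?_ I)
        exact hδanti (nk m) (nk (j+m)) (hnk_mono.monotone (Nat.le_add_left m j))
      · filter_upwards [hkey] with x hx
        exact hx.1.comp (tendsto_add_atTop_nat m)
    refine ENNReal.le_of_forall_pos_le_add fun ε hε hIlt => ?_
    obtain ⟨k, hk⟩ := ENNReal.exists_inv_nat_lt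
      (show ((ε:ℝ≥0∞)) ≠ 0 by exact_mod_cast hε.ne')
    refine le_trans (hm k) (add_le_add_right ?_ I)
    calc δ (nk k) ≤ δ k := hδanti k (nk k) hnk_mono.le_apply
      _ ≤ ((k:ℝ≥0∞))⁻¹ := by
          show ((k:ℝ≥0∞) + 1)⁻¹ ≤ ((k:ℝ≥0∞))⁻¹
          exact ENNReal.inv_le_inv.2 le_self_add
      _ ≤ ε := hk.le
  refine ⟨uu, hh, ?_, ?_⟩
  · filter_upwards [hkey] with x hx
    exact hx.2
  · calc X.N uu * Y.N hh ≤ 1 * I := mul_le_mul' huuX hhY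
      _ = I := one_mul I

end
end

section
/- Suppose X and Y are quasi-normed lattices of measurable functions on the same σ-finite measure space and Y has order continuous quasi-norm. Then the pointwise product XY also has order continuous quasi-norm. -/
open scoped ENNReal NNReal
open Filter MeasureTheory

noncomputable section

variable {α : Type*}

lemma MeasLattice.n_zero_s8 [MeasurableSpace α] {μ : Measure α} (X : MeasLattice μ) :
    X.N 0 = 0 := by
  have h := X.n_smul 0 0
  simpa using h

/-- If `X` and `Y` are quasi-normed lattices of measurable functions on the same
σ-finite measure space and `Y` has order continuous quasi-norm, then the pointwise
product `XY` also has order continuous quasi-norm. -/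
theorem orderCont_prod [MeasurableSpace α] (μ : Measure α) [SigmaFinite μ]
    (X Y : MeasLattice μ) (hY : mOrderCont μ Y.N) :
    mOrderCont μ (mProd μ X.N Y.N) := by
  intro f hF hconv
  set F : α → ℝ := fun x => ⨆ n, |f n x| with hFdef
  have hlt : mProd μ X.N Y.N F < ⊤ := hF.lt_top
  unfold mProd at hlt
  obtain ⟨p, hp⟩ := iInf_lt_iff.mp hlt
  obtain ⟨hpe, hplt⟩ := iInf_lt_iff.mp hp
  -- hpe : F =ᵐ[μ] p.1 * p.2, hplt : X.N p.1 * Y.N p.2 < ⊤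
  have hbd : ∀ᵐ x ∂μ, ∀ n, |f n x| ≤ p.1 x * p.2 x := by
    filter_upwards [hconv, hpe] with x hx hFx
    intro n
    have hb : BddAbove (Set.range fun n => |f n x|) := by
      have h1 : Tendsto (fun n => |f n x|) atTop (nhds |0|) := hx.abs
      exact h1.bddAbove_range
    calc |f n x| ≤ ⨆ m, |f m x| := le_ciSup hb n
    _ = p.1 x * p.2 x := hFx
  have hdeg : (F =ᵐ[μ] 0) →
      Tendsto (fun n => mProd μ X.N Y.N (f n)) atTop (nhds 0) := by
    intro hF0
    have hfz : ∀ n, f n =ᵐ[μ] 0 := by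
      intro n
      filter_upwards [hbd, hpe, hF0] with x hx hFx hFz
      have h1 : |f n x| ≤ 0 := by
        have h2 := hx n
        simp only [Pi.mul_apply] at hFx
        simp only [Pi.zero_apply] at hFz
        rw [← hFx, hFz] at h2
        exact h2
      simpa using le_antisymm h1 (abs_nonneg _)
    have heq : (fun n => mProd μ X.N Y.N (f n)) = fun _ => 0 := by
      funext n
      refine le_antisymm ?_ zero_le
      have hle : mProd μ X.N Y.N (f n) ≤ X.N 0 * Y.N 0 := by
        refine iInf₂_le ((0 : α → ℝ), (0 : α → ℝ)) ?_
        filter_upwards [hfz n] with x hx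
        simp [hx]
      simpa [X.n_zero_s8] using hle
    rw [heq]
    exact tendsto_const_nhds
  by_cases hgt : X.N p.1 = ⊤
  · have hh0 : Y.N p.2 = 0 := by
      by_contra h0
      rw [hgt, ENNReal.top_mul h0] at hplt
      exact lt_irrefl _ hplt
    refine hdeg ?_
    filter_upwards [hpe, Y.n_eq_zero p.2 hh0] with x h1 h2
    simp only [Pi.zero_apply] at h2 ⊢
    simp [h1, h2]
  by_cases hht : Y.N p.2 = ⊤
  · have hg0 : X.N p.1 = 0 := by
      by_contra h0
      rw [hht, ENNReal.mul_top h0] at hplt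
      exact lt_irrefl _ hplt
    refine hdeg ?_
    filter_upwards [hpe, X.n_eq_zero p.1 hg0] with x h1 h2
    simp only [Pi.zero_apply] at h2 ⊢
    simp [h1, h2]
  -- main case
  set k : ℕ → α → ℝ := fun n x => if p.1 x = 0 then 0 else f n x / p.1 x with hk
  have hkey : ∀ᵐ x ∂μ, (∀ n, f n x = p.1 x * k n x) ∧ (∀ n, |k n x| ≤ |p.2 x|) ∧
      Tendsto (fun n => k n x) atTop (nhds 0) := by
    filter_upwards [hbd, hconv] with x hx hcx
    by_cases hg : p.1 x = 0
    · have hfz : ∀ n, f n x = 0 := by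
        intro n
        have h2 := hx n
        rw [hg, zero_mul] at h2
        simpa using le_antisymm h2 (abs_nonneg _)
      refine ⟨fun n => by simp [hk, hg, hfz n], fun n => by simp [hk, hg],
        by simp [hk, hg]⟩
    · have hgpos : 0 < |p.1 x| := abs_pos.mpr hg
      have habs : ∀ n, |f n x| ≤ |p.1 x| * |p.2 x| := fun n =>
        (hx n).trans ((le_abs_self _).trans (abs_mul (p.1 x) (p.2 x)).le)
      refine ⟨fun n => by simp only [hk, if_neg hg]; field_simp, fun n => ?_, ?_⟩
      · simp only [hk, if_neg hg, abs_div]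
        rw [div_le_iff₀ hgpos]
        calc |f n x| ≤ |p.1 x| * |p.2 x| := habs n
        _ = |p.2 x| * |p.1 x| := mul_comm _ _
      · simp only [hk, if_neg hg]
        simpa using hcx.div_const (p.1 x)
  have hsupne : Y.N (fun x => ⨆ n, |k n x|) ≠ ⊤ := by
    have hle : Y.N (fun x => ⨆ n, |k n x|) ≤ Y.N p.2 := by
      refine Y.ideal _ _ ?_
      filter_upwards [hkey] with x hx
      have hnn : 0 ≤ ⨆ n, |k n x| := Real.iSup_nonneg fun n => abs_nonneg _
      rw [abs_of_nonneg hnn]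
      exact Real.iSup_le hx.2.1 (abs_nonneg _)
    exact ne_top_of_le_ne_top hht hle
  have hk0 : ∀ᵐ x ∂μ, Tendsto (fun n => k n x) atTop (nhds 0) := by
    filter_upwards [hkey] with x hx
    exact hx.2.2
  have hNk := hY k hsupne hk0
  have hub : ∀ n, mProd μ X.N Y.N (f n) ≤ X.N p.1 * Y.N (k n) := by
    intro n
    refine iInf₂_le (p.1, k n) ?_
    filter_upwards [hkey] with x hx
    exact hx.1 n
  have hmul : Tendsto (fun n => X.N p.1 * Y.N (k n)) atTop (nhds 0) := by
    have h1 := ENNReal.Tendsto.const_mul hNk (Or.inr hgt)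
    simpa using h1
  exact tendsto_of_tendsto_of_tendsto_of_le_of_le tendsto_const_nhds hmul
    (fun n => zero_le) hub

end
end
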